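/- arXiv:1805.03100 — 2 statements merged into one kernel-verified Lean document; each statement's English description precedes it below -/
import Mathlib

section
/- Let ε ∈ (0, 1/2) and let X, Y₁, …, Y_m be independent discrete random variables of finite entropy such that H(X + Y_i) ≤ (1 + Cε)·H(X) for each i = 1, …, m, for some constant C > 0. Then H(X + Y₁ + ⋯ + Y_m) ≤ (1 + m·C·ε)·H(X). -/
open MeasureTheory ProbabilityTheory

/-- Shannon entropy (base 2) of a real-valued random variable. -/
noncomputable def ent {Ω : Type*} [MeasurableSpace Ω] (μ : Measure Ω) (X : Ω → ℝ) : ℝ :=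
  ∑' x : ℝ, -((μ (X ⁻¹' {x})).toReal * Real.logb 2 (μ (X ⁻¹' {x})).toReal)

/-- `X` is a discrete (countably-valued) measurable random variable of finite entropy. -/
def DiscreteFinEnt {Ω : Type*} [MeasurableSpace Ω] (μ : Measure Ω) (X : Ω → ℝ) : Prop :=
  Measurable X ∧ Set.Countable (Set.range X) ∧
    Summable (fun x : ℝ => -((μ (X ⁻¹' {x})).toReal * Real.logb 2 (μ (X ⁻¹' {x})).toReal))


open scoped ENNReal

noncomputable def Lg (x : ℝ≥0∞) : ℝ≥0∞ := ENNReal.ofReal (-Real.logb 2 x.toReal)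

noncomputable def ee (x : ℝ≥0∞) : ℝ≥0∞ :=
  ENNReal.ofReal (-(x.toReal * Real.logb 2 x.toReal))

noncomputable def entH {α : Type*} (f : α → ℝ≥0∞) : ℝ≥0∞ := ∑' a, ee (f a)

lemma ee_eq_mul_Lg {x : ℝ≥0∞} (hx : x ≤ 1) : ee x = x * Lg x := by
  have hxt : x ≠ ∞ := (hx.trans_lt ENNReal.one_lt_top).ne
  rw [ee, Lg, show -(x.toReal * Real.logb 2 x.toReal) = x.toReal * -(Real.logb 2 x.toReal) by ring,
    ENNReal.ofReal_mul ENNReal.toReal_nonneg, ENNReal.ofReal_toReal hxt]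

lemma logb_nonpos_of_le_one {x : ℝ≥0∞} (hx : x ≤ 1) : Real.logb 2 x.toReal ≤ 0 :=
  Real.logb_nonpos one_lt_two ENNReal.toReal_nonneg
    (by simpa using ENNReal.toReal_mono ENNReal.one_ne_top hx)

lemma tsum_ofReal_ne_top_iff {α : Type*} {u : α → ℝ} (hu : ∀ a, 0 ≤ u a) :
    (∑' a, ENNReal.ofReal (u a)) ≠ ∞ ↔ Summable u := by
  constructor
  · intro h
    have := ENNReal.summable_toReal h
    simpa [ENNReal.toReal_ofReal, hu _] using this
  · intro h
    rw [← ENNReal.ofReal_tsum_of_nonneg hu h]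
    exact ENNReal.ofReal_ne_top

lemma tsum_ofReal_toReal {α : Type*} {u : α → ℝ} (hu : ∀ a, 0 ≤ u a) (h : Summable u) :
    (∑' a, ENNReal.ofReal (u a)).toReal = ∑' a, u a := by
  rw [← ENNReal.ofReal_tsum_of_nonneg hu h, ENNReal.toReal_ofReal (tsum_nonneg hu)]

/-- Gibbs' inequality in `ℝ≥0∞`. -/
lemma gibbs {α : Type*} {f g : α → ℝ≥0∞} (hf : ∑' a, f a = 1) (hg : ∑' a, g a ≤ 1)
    (h0 : ∀ a, f a ≠ 0 → g a ≠ 0) :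
    entH f ≤ ∑' a, f a * Lg (g a) := by
  set CE := ∑' a, f a * Lg (g a) with hCE
  rcases eq_or_ne CE ∞ with h | hCEtop
  · exact h ▸ le_top
  -- everything is finite; pass to real numbers
  have hf1 : ∀ a, f a ≤ 1 := fun a => (ENNReal.le_tsum a).trans hf.le
  have hg1 : ∀ a, g a ≤ 1 := fun a => (ENNReal.le_tsum a).trans hg
  have hft : ∀ a, f a ≠ ∞ := fun a => ((hf1 a).trans_lt ENNReal.one_lt_top).ne
  have hgt : ∀ a, g a ≠ ∞ := fun a => ((hg1 a).trans_lt ENNReal.one_lt_top).ne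
  set F : α → ℝ := fun a => (f a).toReal with hF
  set G : α → ℝ := fun a => (g a).toReal with hG
  have hFnn : ∀ a, 0 ≤ F a := fun a => ENNReal.toReal_nonneg
  have hGnn : ∀ a, 0 ≤ G a := fun a => ENNReal.toReal_nonneg
  have hFsum : Summable F := ENNReal.summable_toReal (by rw [hf]; exact ENNReal.one_ne_top)
  have hGsum : Summable G := ENNReal.summable_toReal (hg.trans_lt ENNReal.one_lt_top).ne
  have hFtsum : ∑' a, F a = 1 := by
    rw [hF]; simp only [← ENNReal.tsum_toReal_eq hft, hf, ENNReal.toReal_one]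
  have hGtsum : ∑' a, G a ≤ 1 := by
    have := ENNReal.toReal_mono ENNReal.one_ne_top hg
    rwa [ENNReal.tsum_toReal_eq hgt, ENNReal.toReal_one] at this
  -- rewrite CE terms
  have hterm : ∀ a, f a * Lg (g a) = ENNReal.ofReal (F a * (-Real.logb 2 (G a))) := by
    intro a
    rw [Lg, ENNReal.ofReal_mul (hFnn a), ENNReal.ofReal_toReal (hft a)]
  have hCEterm_nn : ∀ a, 0 ≤ F a * (-Real.logb 2 (G a)) := fun a =>
    mul_nonneg (hFnn a) (by simpa using logb_nonpos_of_le_one (hg1 a))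
  have hCEsum : Summable (fun a => F a * (-Real.logb 2 (G a))) := by
    rw [← tsum_ofReal_ne_top_iff hCEterm_nn]
    have : (∑' a, ENNReal.ofReal (F a * (-Real.logb 2 (G a)))) = CE := by
      rw [hCE]; exact tsum_congr fun a => (hterm a).symm
    rw [this]; exact hCEtop
  -- entropy terms
  have heterm : ∀ a, ee (f a) = ENNReal.ofReal (F a * (-Real.logb 2 (F a))) := by
    intro a; rw [ee]; ring_nf; rfl
  have hent_nn : ∀ a, 0 ≤ F a * (-Real.logb 2 (F a)) := fun a =>
    mul_nonneg (hFnn a) (by simpa using logb_nonpos_of_le_one (hf1 a))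
  -- key pointwise bound
  have key : ∀ a, F a * (-Real.logb 2 (F a)) ≤
      F a * (-Real.logb 2 (G a)) + (G a - F a) / Real.log 2 := by
    intro a
    rcases eq_or_lt_of_le (hFnn a) with h0a | hpos
    · simp only [← h0a]
      simp [div_nonneg (hGnn a) (Real.log_nonneg one_le_two)]
    · have hfa0 : f a ≠ 0 := by
        simp only [hF] at hpos
        intro h; rw [h] at hpos; simp at hpos
      have hGpos : 0 < G a := ENNReal.toReal_pos (h0 a hfa0) (hgt a)
      have hlog : Real.log (G a / F a) ≤ G a / F a - 1 :=
        Real.log_le_sub_one_of_pos (div_pos hGpos hpos)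
      have hlogb : Real.logb 2 (G a) - Real.logb 2 (F a) ≤ (G a / F a - 1) / Real.log 2 := by
        rw [← Real.logb_div hGpos.ne' hpos.ne']
        rw [Real.logb, div_le_div_iff_of_pos_right (Real.log_pos one_lt_two)] at *
        · exact hlog
      have h2 : 0 < Real.log 2 := Real.log_pos one_lt_two
      have := mul_le_mul_of_nonneg_left hlogb (hFnn a)
      have hfd : F a * ((G a / F a - 1) / Real.log 2) = (G a - F a) / Real.log 2 := by
        field_simp
      nlinarith [this]
  have hentsum : Summable (fun a => F a * (-Real.logb 2 (F a))) := by
    apply Summable.of_nonneg_of_le hent_nn key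
    exact (hCEsum.add ((hGsum.sub hFsum).div_const _))
  have hle : ∑' a, F a * (-Real.logb 2 (F a)) ≤
      ∑' a, (F a * (-Real.logb 2 (G a)) + (G a - F a) / Real.log 2) :=
    Summable.tsum_le_tsum key hentsum (hCEsum.add ((hGsum.sub hFsum).div_const _))
  have hsplit : ∑' a, (F a * (-Real.logb 2 (G a)) + (G a - F a) / Real.log 2)
      = (∑' a, F a * (-Real.logb 2 (G a))) + (∑' a, G a - ∑' a, F a) / Real.log 2 := by
    rw [Summable.tsum_add hCEsum ((hGsum.sub hFsum).div_const _), tsum_div_const,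
      Summable.tsum_sub hGsum hFsum]
  have hfinal : ∑' a, F a * (-Real.logb 2 (F a)) ≤ ∑' a, F a * (-Real.logb 2 (G a)) := by
    have h2 : 0 < Real.log 2 := Real.log_pos one_lt_two
    have : (∑' a, G a - ∑' a, F a) / Real.log 2 ≤ 0 := by
      apply div_nonpos_of_nonpos_of_nonneg _ h2.le
      rw [hFtsum]; linarith [hGtsum]
    linarith [hle, hsplit ▸ hle]
  calc entH f = ENNReal.ofReal (∑' a, F a * (-Real.logb 2 (F a))) := by
        rw [entH]
        simp only [heterm]
        rw [ENNReal.ofReal_tsum_of_nonneg hent_nn hentsum]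
    _ ≤ ENNReal.ofReal (∑' a, F a * (-Real.logb 2 (G a))) := ENNReal.ofReal_le_ofReal hfinal
    _ = CE := by
        rw [hCE]
        simp only [hterm]
        rw [ENNReal.ofReal_tsum_of_nonneg hCEterm_nn hCEsum]

lemma tsum_shift (f : ℝ → ℝ≥0∞) (c : ℝ) : ∑' s, f (s - c) = ∑' s, f s :=
  (Equiv.subRight c).tsum_eq f

lemma tsum_reflect (f : ℝ → ℝ≥0∞) (c : ℝ) : ∑' x, f (c - x) = ∑' x, f x :=
  (Equiv.subLeft c).tsum_eq f

/-- entropy of a product mass: `ee (u*v) = u * ee v + v * ee u` for `u v ≤ 1`. -/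
lemma ee_mul {u v : ℝ≥0∞} (hu : u ≤ 1) (hv : v ≤ 1) :
    ee (u * v) = u * ee v + v * ee u := by
  have hut : u ≠ ∞ := (hu.trans_lt ENNReal.one_lt_top).ne
  have hvt : v ≠ ∞ := (hv.trans_lt ENNReal.one_lt_top).ne
  set s := u.toReal with hs
  set t := v.toReal with ht
  have hsnn : 0 ≤ s := ENNReal.toReal_nonneg
  have htnn : 0 ≤ t := ENNReal.toReal_nonneg
  have hkey : -((s * t) * Real.logb 2 (s * t)) =
      s * (-(t * Real.logb 2 t)) + t * (-(s * Real.logb 2 s)) := by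
    rcases eq_or_lt_of_le hsnn with h | h
    · simp [← h]
    rcases eq_or_lt_of_le htnn with h' | h'
    · simp [← h']
    rw [Real.logb_mul h.ne' h'.ne']; ring
  have h1 : 0 ≤ -(t * Real.logb 2 t) := by
    have := logb_nonpos_of_le_one hv; nlinarith
  have h2 : 0 ≤ -(s * Real.logb 2 s) := by
    have := logb_nonpos_of_le_one hu; nlinarith
  rw [ee, ENNReal.toReal_mul, ← hs, ← ht, hkey, ENNReal.ofReal_add (by positivity) (by positivity),
    ENNReal.ofReal_mul hsnn, ENNReal.ofReal_mul htnn, ENNReal.ofReal_toReal hut,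
    ENNReal.ofReal_toReal hvt, ee, ee, ← hs, ← ht]

lemma entH_prod {α β : Type*} {f : α → ℝ≥0∞} {g : β → ℝ≥0∞}
    (hf : ∑' a, f a = 1) (hg : ∑' b, g b = 1) :
    ∑' a, ∑' b, ee (f a * g b) = entH f + entH g := by
  have hf1 : ∀ a, f a ≤ 1 := fun a => (ENNReal.le_tsum a).trans hf.le
  have hg1 : ∀ b, g b ≤ 1 := fun b => (ENNReal.le_tsum b).trans hg.le
  calc ∑' a, ∑' b, ee (f a * g b) = ∑' a, ∑' b, (f a * ee (g b) + g b * ee (f a)) := by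
        exact tsum_congr fun a => tsum_congr fun b => ee_mul (hf1 a) (hg1 b)
    _ = ∑' a, (f a * entH g + ee (f a)) := by
        refine tsum_congr fun a => ?_
        rw [ENNReal.tsum_add, ENNReal.tsum_mul_left, ENNReal.tsum_mul_right, hg, one_mul, entH]
    _ = entH f + entH g := by
        rw [ENNReal.tsum_add, ENNReal.tsum_mul_right, hf, one_mul, entH, entH, add_comm]

noncomputable def conv (f g : ℝ → ℝ≥0∞) : ℝ → ℝ≥0∞ := fun s => ∑' x, f x * g (s - x)

lemma conv_swap (f g : ℝ → ℝ≥0∞) (s : ℝ) : conv f g s = ∑' z, g z * f (s - z) := by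
  rw [conv, ← tsum_reflect (fun x => f x * g (s - x)) s]
  exact tsum_congr fun z => by rw [sub_sub_cancel, mul_comm]

lemma tsum_conv (f g : ℝ → ℝ≥0∞) : ∑' s, conv f g s = (∑' x, f x) * ∑' x, g x := by
  simp only [conv]
  rw [ENNReal.tsum_comm]
  calc ∑' x, ∑' s, f x * g (s - x) = ∑' x, f x * ∑' s, g (s - x) := by
        exact tsum_congr fun x => ENNReal.tsum_mul_left
    _ = ∑' x, f x * ∑' s, g s := by
        exact tsum_congr fun x => by rw [tsum_shift]
    _ = (∑' x, f x) * ∑' x, g x := ENNReal.tsum_mul_right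

lemma conv_le_one {f g : ℝ → ℝ≥0∞} (hf : ∑' x, f x = 1) (hg : ∑' x, g x = 1) (s : ℝ) :
    conv f g s ≤ 1 := by
  have : ∑' s, conv f g s = 1 := by rw [tsum_conv, hf, hg, one_mul]
  exact (ENNReal.le_tsum s).trans this.le

lemma Lg_antitone {u v : ℝ≥0∞} (hu : u ≠ 0) (huv : u ≤ v) (hv : v ≤ 1) : Lg v ≤ Lg u := by
  have hvt : v ≠ ∞ := (hv.trans_lt ENNReal.one_lt_top).ne
  have hut : u ≠ ∞ := (huv.trans_lt (hv.trans_lt ENNReal.one_lt_top)).ne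
  apply ENNReal.ofReal_le_ofReal
  have hup : 0 < u.toReal := ENNReal.toReal_pos hu hut
  have : u.toReal ≤ v.toReal := ENNReal.toReal_mono hvt huv
  have := Real.logb_le_logb_of_le (b := 2) one_lt_two hup this
  linarith
/-- Subadditivity: `H(f ∗ g) ≤ H f + H g`. -/
lemma entH_conv_le {f g : ℝ → ℝ≥0∞} (hf : ∑' x, f x = 1) (hg : ∑' x, g x = 1) :
    entH (conv f g) ≤ entH f + entH g := by
  have hf1 : ∀ a, f a ≤ 1 := fun a => (ENNReal.le_tsum a).trans hf.le
  have hg1 : ∀ b, g b ≤ 1 := fun b => (ENNReal.le_tsum b).trans hg.le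
  have hc1 : ∀ s, conv f g s ≤ 1 := conv_le_one hf hg
  calc entH (conv f g) = ∑' s, ∑' x, f x * g (s - x) * Lg (conv f g s) := by
        refine tsum_congr fun s => ?_
        rw [ee_eq_mul_Lg (hc1 s), conv, ENNReal.tsum_mul_right]
    _ ≤ ∑' s, ∑' x, f x * g (s - x) * Lg (f x * g (s - x)) := by
        refine Summable.tsum_le_tsum (fun s => Summable.tsum_le_tsum (fun x => ?_) ENNReal.summable
          ENNReal.summable) ENNReal.summable ENNReal.summable
        rcases eq_or_ne (f x * g (s - x)) 0 with h | h
        · rw [h]; simp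
        · exact mul_le_mul_right (Lg_antitone h (ENNReal.le_tsum x) (hc1 s)) _
    _ = ∑' x, ∑' s, ee (f x * g (s - x)) := by
        rw [ENNReal.tsum_comm]
        refine tsum_congr fun x => tsum_congr fun s => ?_
        rw [ee_eq_mul_Lg ((mul_le_mul' (hf1 x) (hg1 (s - x))).trans (by simp))]
    _ = ∑' x, ∑' t, ee (f x * g t) := by
        exact tsum_congr fun x => tsum_shift (fun t => ee (f x * g t)) x
    _ = entH f + entH g := entH_prod hf hg

/-- Monotonicity: `H f ≤ H (f ∗ g)`. -/
lemma le_entH_conv {f g : ℝ → ℝ≥0∞} (hf : ∑' x, f x = 1) (hg : ∑' x, g x = 1) :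
    entH f ≤ entH (conv f g) := by
  have hc1 : ∀ s, conv f g s ≤ 1 := conv_le_one hf hg
  have hcsum : ∑' s, conv f g s = 1 := by rw [tsum_conv, hf, hg, one_mul]
  have key : ∀ z, g z ≠ 0 → entH f ≤ ∑' s, f (s - z) * Lg (conv f g s) := by
    intro z hz
    have hshift : ∑' s, f (s - z) = 1 := by rw [tsum_shift, hf]
    have h0 : ∀ s, f (s - z) ≠ 0 → conv f g s ≠ 0 := by
      intro s hfs
      intro hcs
      have : g z * f (s - z) ≤ conv f g s := by
        rw [conv_swap]; exact ENNReal.le_tsum z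
      rw [hcs, le_zero_iff, mul_eq_zero] at this
      tauto
    have := gibbs (f := fun s => f (s - z)) (g := conv f g) hshift hcsum.le h0
    calc entH f = entH (fun s => f (s - z)) := (tsum_shift (fun s => ee (f s)) z).symm
      _ ≤ _ := this
  calc entH f = ∑' z, g z * entH f := by rw [ENNReal.tsum_mul_right, hg, one_mul]
    _ ≤ ∑' z, g z * ∑' s, f (s - z) * Lg (conv f g s) := by
        refine Summable.tsum_le_tsum (fun z => ?_) ENNReal.summable ENNReal.summable
        rcases eq_or_ne (g z) 0 with h | h
        · rw [h]; simp
        · exact mul_le_mul_right (key z h) _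
    _ = ∑' z, ∑' s, g z * f (s - z) * Lg (conv f g s) := by
        refine tsum_congr fun z => ?_
        rw [← ENNReal.tsum_mul_left]
        exact tsum_congr fun s => (mul_assoc _ _ _).symm
    _ = ∑' s, ∑' z, g z * f (s - z) * Lg (conv f g s) := ENNReal.tsum_comm
    _ = ∑' s, conv f g s * Lg (conv f g s) := by
        refine tsum_congr fun s => ?_
        rw [conv_swap, ENNReal.tsum_mul_right]
    _ = entH (conv f g) := by
        exact tsum_congr fun s => (ee_eq_mul_Lg (hc1 s)).symm
noncomputable def c3 (p q r : ℝ → ℝ≥0∞) : ℝ → ℝ≥0∞ :=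
  fun s => ∑' y, ∑' z, q y * r z * p (s - y - z)

lemma tsum_triple (F : ℝ × ℝ × ℝ → ℝ≥0∞) :
    ∑' t, F t = ∑' y, ∑' z, ∑' s, F (y, z, s) := by
  rw [ENNReal.tsum_prod']; exact tsum_congr fun y => ENNReal.tsum_prod'

lemma reorder3 (F : ℝ → ℝ → ℝ → ℝ≥0∞) :
    ∑' y, ∑' z, ∑' s, F y z s = ∑' s, ∑' y, ∑' z, F y z s := by
  rw [show (∑' y, ∑' z, ∑' s, F y z s) = ∑' y, ∑' s, ∑' z, F y z s from
    tsum_congr fun y => ENNReal.tsum_comm]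
  exact ENNReal.tsum_comm

lemma reorder3' (F : ℝ → ℝ → ℝ → ℝ≥0∞) :
    ∑' y, ∑' z, ∑' s, F y z s = ∑' z, ∑' s, ∑' y, F y z s := by
  rw [show (∑' y, ∑' z, ∑' s, F y z s) = ∑' z, ∑' y, ∑' s, F y z s from ENNReal.tsum_comm]
  exact tsum_congr fun z => ENNReal.tsum_comm

lemma c3_eq_q (p q r : ℝ → ℝ≥0∞) (s : ℝ) :
    c3 p q r s = ∑' y, q y * conv p r (s - y) := by
  refine tsum_congr fun y => ?_
  rw [conv_swap, ← ENNReal.tsum_mul_left]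
  exact tsum_congr fun z => (mul_assoc _ _ _)

lemma c3_eq_r (p q r : ℝ → ℝ≥0∞) (s : ℝ) :
    c3 p q r s = ∑' z, r z * conv p q (s - z) := by
  rw [c3, ENNReal.tsum_comm]
  refine tsum_congr fun z => ?_
  rw [conv_swap, ← ENNReal.tsum_mul_left]
  refine tsum_congr fun y => ?_
  rw [sub_right_comm]; ring

lemma tsum_mix {q h : ℝ → ℝ≥0∞} (hq : ∑' x, q x = 1) (hh : ∑' x, h x = 1) :
    ∑' s, ∑' y, q y * h (s - y) = 1 := by
  rw [ENNReal.tsum_comm]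
  calc ∑' y, ∑' s, q y * h (s - y) = ∑' y, q y * ∑' s, h (s - y) :=
        tsum_congr fun y => ENNReal.tsum_mul_left
    _ = 1 := by
        simp only [tsum_shift, hh, mul_one, hq]

lemma tsum_c3 {p q r : ℝ → ℝ≥0∞} (hp : ∑' x, p x = 1) (hq : ∑' x, q x = 1)
    (hr : ∑' x, r x = 1) : ∑' s, c3 p q r s = 1 := by
  have hb : ∑' x, conv p r x = 1 := by rw [tsum_conv, hp, hr, one_mul]
  calc ∑' s, c3 p q r s = ∑' s, ∑' y, q y * conv p r (s - y) :=
        tsum_congr fun s => c3_eq_q p q r s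
    _ = 1 := tsum_mix hq hb

/-- The Kaimanovich–Vershik / submodularity inequality for convolutions. -/
lemma kv_core {p q r : ℝ → ℝ≥0∞} (hp : ∑' x, p x = 1) (hq : ∑' x, q x = 1)
    (hr : ∑' x, r x = 1) (hqf : entH q ≠ ∞) (hrf : entH r ≠ ∞) :
    entH (c3 p q r) + entH p ≤ entH (conv p q) + entH (conv p r) := by
  set a := conv p q with ha
  set b := conv p r with hb
  set c := c3 p q r with hc
  have ha1 : ∑' x, a x = 1 := by rw [ha, tsum_conv, hp, hq, one_mul]
  have hb1 : ∑' x, b x = 1 := by rw [hb, tsum_conv, hp, hr, one_mul]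
  have hc1 : ∑' x, c x = 1 := tsum_c3 hp hq hr
  have hcle : ∀ s, c s ≤ 1 := fun s => (ENNReal.le_tsum s).trans hc1.le
  have hale : ∀ s, a s ≤ 1 := fun s => (ENNReal.le_tsum s).trans ha1.le
  have hble : ∀ s, b s ≤ 1 := fun s => (ENNReal.le_tsum s).trans hb1.le
  have hqle : ∀ s, q s ≤ 1 := fun s => (ENNReal.le_tsum s).trans hq.le
  have hrle : ∀ s, r s ≤ 1 := fun s => (ENNReal.le_tsum s).trans hr.le
  have hUlec : ∀ y s, q y * b (s - y) ≤ c s := by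
    intro y s; rw [hc, c3_eq_q]; exact ENNReal.le_tsum y
  have hVlec : ∀ z s, r z * a (s - z) ≤ c s := by
    intro z s; rw [hc, c3_eq_r]; exact ENNReal.le_tsum z
  set w : ℝ × ℝ × ℝ → ℝ≥0∞ := fun t => q t.1 * r t.2.1 * p (t.2.2 - t.1 - t.2.1) with hw
  set g : ℝ × ℝ × ℝ → ℝ≥0∞ :=
    fun t => (q t.1 * b (t.2.2 - t.1)) * (r t.2.1 * a (t.2.2 - t.2.1)) / c t.2.2 with hg
  -- w sums to 1
  have hW : ∑' t, w t = 1 := by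
    rw [tsum_triple]
    calc ∑' y, ∑' z, ∑' s, w (y, z, s)
        = ∑' y, ∑' z, (q y * r z) * ∑' s, p (s - (y + z)) := by
          refine tsum_congr fun y => tsum_congr fun z => ?_
          rw [show (fun s => w (y, z, s)) = fun s => (q y * r z) * p (s - (y + z)) from
            funext fun s => by rw [hw]; simp only [mul_assoc]; rw [sub_sub]]
          exact ENNReal.tsum_mul_left
      _ = 1 := by
          simp only [tsum_shift, hp, mul_one]
          rw [show (∑' y, ∑' z, q y * r z : ℝ≥0∞) = ∑' y, q y * ∑' z, r z from
            tsum_congr fun y => ENNReal.tsum_mul_left, hr]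
          simp [hq]
  -- entropy of w
  have hprodsum : ∑' (v : ℝ × ℝ), r v.1 * p v.2 = 1 := by
    rw [ENNReal.tsum_prod']
    calc ∑' z, ∑' u, r z * p u = ∑' z, r z * ∑' u, p u :=
          tsum_congr fun z => ENNReal.tsum_mul_left
      _ = 1 := by rw [hp]; simpa using hr
  have hHw : ∑' t, ee (w t) = entH q + (entH r + entH p) := by
    rw [tsum_triple]
    calc ∑' y, ∑' z, ∑' s, ee (w (y, z, s))
        = ∑' y, ∑' z, ∑' u, ee (q y * (r z * p u)) := by
          refine tsum_congr fun y => tsum_congr fun z => ?_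
          rw [show (fun s => ee (w (y, z, s))) = fun s => (fun u => ee (q y * (r z * p u))) (s - (y+z)) from
            funext fun s => by rw [hw]; simp only; rw [sub_sub, mul_assoc]]
          exact tsum_shift (fun u => ee (q y * (r z * p u))) (y + z)
      _ = ∑' y, ∑' (v : ℝ × ℝ), ee (q y * (r v.1 * p v.2)) := by
          exact tsum_congr fun y =>
            (ENNReal.tsum_prod' (f := fun v : ℝ × ℝ => ee (q y * (r v.1 * p v.2)))).symm
      _ = entH q + entH (fun v : ℝ × ℝ => r v.1 * p v.2) := entH_prod hq hprodsum
      _ = entH q + (entH r + entH p) := by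
          rw [show entH (fun v : ℝ × ℝ => r v.1 * p v.2) = entH r + entH p from ?_]
          rw [entH, ENNReal.tsum_prod']
          exact entH_prod hr hp
  -- g sums to 1
  have hG : ∑' t, g t = 1 := by
    rw [tsum_triple, reorder3 (fun y z s => g (y, z, s))]
    have : ∀ s, (∑' y, ∑' z, g (y, z, s)) = c s := by
      intro s
      have hz : ∀ y, (∑' z, g (y, z, s)) = (q y * b (s - y)) * (c s * (c s)⁻¹) := by
        intro y
        calc ∑' z, g (y, z, s)
            = ∑' z, (q y * b (s - y)) * ((r z * a (s - z)) * (c s)⁻¹) := by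
              refine tsum_congr fun z => ?_
              rw [hg]; simp only [div_eq_mul_inv]; ring
          _ = (q y * b (s - y)) * ((∑' z, r z * a (s - z)) * (c s)⁻¹) := by
              rw [ENNReal.tsum_mul_left, ENNReal.tsum_mul_right]
          _ = (q y * b (s - y)) * (c s * (c s)⁻¹) := by rw [← c3_eq_r p q r s, ← hc]
      rw [tsum_congr hz, ENNReal.tsum_mul_right, ← c3_eq_q p q r s, ← hc]
      rcases eq_or_ne (c s) 0 with h | h
      · rw [h]; simp
      · rw [ENNReal.mul_inv_cancel h ((hcle s).trans_lt ENNReal.one_lt_top).ne, mul_one]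
    rw [tsum_congr this, hc1]
  -- nonzero facts
  have hbpos : ∀ y z s, p (s - y - z) ≠ 0 → r z ≠ 0 → b (s - y) ≠ 0 := by
    intro y z s hp0 hr0
    have : p (s - y - z) * r z ≤ b (s - y) := by
      have := ENNReal.le_tsum (f := fun x => p x * r (s - y - x)) (s - y - z)
      rwa [sub_sub_cancel] at this
    intro h; rw [h, le_zero_iff, mul_eq_zero] at this; tauto
  have hapos : ∀ y z s, p (s - y - z) ≠ 0 → q y ≠ 0 → a (s - z) ≠ 0 := by
    intro y z s hp0 hq0
    have harg : s - z - (s - y - z) = y := by ring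
    have : p (s - y - z) * q y ≤ a (s - z) := by
      have := ENNReal.le_tsum (f := fun x => p x * q (s - z - x)) (s - y - z)
      rwa [harg] at this
    intro h; rw [h, le_zero_iff, mul_eq_zero] at this; tauto
  have h0 : ∀ t, w t ≠ 0 → g t ≠ 0 := by
    rintro ⟨y, z, s⟩ hwt
    rw [hw] at hwt; simp only [ne_eq, mul_eq_zero, not_or] at hwt
    obtain ⟨⟨hq0, hr0⟩, hp0⟩ := hwt
    rw [hg]; simp only [ne_eq, ENNReal.div_eq_zero_iff, mul_eq_zero, not_or]
    exact ⟨⟨⟨hq0, hbpos y z s hp0 hr0⟩, ⟨hr0, hapos y z s hp0 hq0⟩⟩,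
      ((hcle s).trans_lt ENNReal.one_lt_top).ne⟩
  -- Gibbs
  have hGibbs : ∑' t, ee (w t) ≤ ∑' t, w t * Lg (g t) := gibbs hW hG.le h0
  -- pointwise split
  have hsplit : ∀ t, w t * Lg (g t) + w t * Lg (c t.2.2) =
      w t * Lg (q t.1 * b (t.2.2 - t.1)) + w t * Lg (r t.2.1 * a (t.2.2 - t.2.1)) := by
    rintro ⟨y, z, s⟩
    rcases eq_or_ne (w (y, z, s)) 0 with h | h
    · rw [h]; simp
    have hgz := h0 _ h
    rw [hw] at h; simp only [ne_eq, mul_eq_zero, not_or] at h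
    obtain ⟨⟨hq0, hr0⟩, hp0⟩ := h
    set U := q y * b (s - y) with hU
    set V := r z * a (s - z) with hV
    have hU0 : U ≠ 0 := mul_ne_zero hq0 (hbpos y z s hp0 hr0)
    have hV0 : V ≠ 0 := mul_ne_zero hr0 (hapos y z s hp0 hq0)
    have hUle : U ≤ 1 := (hUlec y s).trans (hcle s)
    have hVle : V ≤ 1 := (hVlec z s).trans (hcle s)
    have hc0 : c s ≠ 0 := fun hh => hU0 (le_zero_iff.mp (hh ▸ hUlec y s))
    have hUt : U ≠ ∞ := (hUle.trans_lt ENNReal.one_lt_top).ne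
    have hVt : V ≠ ∞ := (hVle.trans_lt ENNReal.one_lt_top).ne
    have hct : c s ≠ ∞ := ((hcle s).trans_lt ENNReal.one_lt_top).ne
    have hgle : g (y, z, s) ≤ 1 := (ENNReal.le_tsum _).trans hG.le
    have hgval : g (y, z, s) = U * V / c s := by rw [hg]
    have hUr : 0 < U.toReal := ENNReal.toReal_pos hU0 hUt
    have hVr : 0 < V.toReal := ENNReal.toReal_pos hV0 hVt
    have hcr : 0 < (c s).toReal := ENNReal.toReal_pos hc0 hct
    have hlog : -Real.logb 2 (g (y,z,s)).toReal + -Real.logb 2 (c s).toReal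
        = -Real.logb 2 U.toReal + -Real.logb 2 V.toReal := by
      rw [hgval, ENNReal.toReal_div, ENNReal.toReal_mul,
        Real.logb_div (by positivity) hcr.ne', Real.logb_mul hUr.ne' hVr.ne']
      ring
    have key : Lg (g (y,z,s)) + Lg (c s) = Lg U + Lg V := by
      rw [Lg, Lg, Lg, Lg, ← ENNReal.ofReal_add (by simpa using logb_nonpos_of_le_one hgle)
        (by simpa using logb_nonpos_of_le_one (hcle s)), hlog,
        ENNReal.ofReal_add (by simpa using logb_nonpos_of_le_one hUle)
        (by simpa using logb_nonpos_of_le_one hVle)]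
    calc w (y,z,s) * Lg (g (y,z,s)) + w (y,z,s) * Lg (c s)
        = w (y,z,s) * (Lg (g (y,z,s)) + Lg (c s)) := by rw [mul_add]
      _ = w (y,z,s) * (Lg U + Lg V) := by rw [key]
      _ = _ := by rw [mul_add]
  -- the three sums
  have S1 : ∑' t, w t * Lg (c t.2.2) = entH c := by
    rw [tsum_triple, reorder3 (fun y z s => w (y,z,s) * Lg (c s))]
    refine tsum_congr fun s => ?_
    calc ∑' y, ∑' z, w (y, z, s) * Lg (c s)
        = (∑' y, ∑' z, w (y, z, s)) * Lg (c s) := by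
          rw [← ENNReal.tsum_mul_right]
          exact tsum_congr fun y => ENNReal.tsum_mul_right
      _ = c s * Lg (c s) := by rw [hc]; rfl
      _ = ee (c s) := (ee_eq_mul_Lg (hcle s)).symm
  have S2 : ∑' t, w t * Lg (q t.1 * b (t.2.2 - t.1)) = entH q + entH b := by
    rw [tsum_triple]
    calc ∑' y, ∑' z, ∑' s, w (y,z,s) * Lg (q y * b (s - y))
        = ∑' y, ∑' s, ∑' z, w (y,z,s) * Lg (q y * b (s - y)) :=
          tsum_congr fun y => ENNReal.tsum_comm
      _ = ∑' y, ∑' s, ee (q y * b (s - y)) := by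
          refine tsum_congr fun y => tsum_congr fun s => ?_
          rw [ENNReal.tsum_mul_right]
          rw [show (∑' z, w (y,z,s)) = q y * b (s - y) from ?_]
          · exact (ee_eq_mul_Lg ((hUlec y s).trans (hcle s))).symm
          · rw [hb, conv_swap, ← ENNReal.tsum_mul_left]
            exact tsum_congr fun z => (mul_assoc _ _ _)
      _ = ∑' y, ∑' u, ee (q y * b u) :=
          tsum_congr fun y => tsum_shift (fun u => ee (q y * b u)) y
      _ = entH q + entH b := entH_prod hq hb1
  have S3 : ∑' t, w t * Lg (r t.2.1 * a (t.2.2 - t.2.1)) = entH r + entH a := by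
    rw [tsum_triple, reorder3' (fun y z s => w (y,z,s) * Lg (r z * a (s - z)))]
    calc ∑' z, ∑' s, ∑' y, w (y,z,s) * Lg (r z * a (s - z))
        = ∑' z, ∑' s, ee (r z * a (s - z)) := by
          refine tsum_congr fun z => tsum_congr fun s => ?_
          rw [ENNReal.tsum_mul_right]
          rw [show (∑' y, w (y,z,s)) = r z * a (s - z) from ?_]
          · exact (ee_eq_mul_Lg ((hVlec z s).trans (hcle s))).symm
          · rw [ha, conv_swap, ← ENNReal.tsum_mul_left]
            refine tsum_congr fun y => ?_
            rw [hw]; simp only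
            rw [sub_right_comm]; ring
      _ = ∑' z, ∑' u, ee (r z * a u) :=
          tsum_congr fun z => tsum_shift (fun u => ee (r z * a u)) z
      _ = entH r + entH a := entH_prod hr ha1
  -- assemble
  have hsum : ∑' t, w t * Lg (g t) + ∑' t, w t * Lg (c t.2.2)
      = (entH q + entH b) + (entH r + entH a) := by
    rw [← ENNReal.tsum_add, tsum_congr hsplit, ENNReal.tsum_add, S2, S3]
  have main : (entH q + entH r) + (entH c + entH p) ≤ (entH q + entH r) + (entH a + entH b) := by
    calc (entH q + entH r) + (entH c + entH p)
        = (entH q + (entH r + entH p)) + entH c := by ring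
      _ = ∑' t, ee (w t) + entH c := by rw [hHw]
      _ ≤ ∑' t, w t * Lg (g t) + entH c := add_le_add_left hGibbs _
      _ = ∑' t, w t * Lg (g t) + ∑' t, w t * Lg (c t.2.2) := by rw [S1]
      _ = (entH q + entH b) + (entH r + entH a) := hsum
      _ = (entH q + entH r) + (entH a + entH b) := by ring
  exact (ENNReal.add_le_add_iff_left (ENNReal.add_ne_top.2 ⟨hqf, hrf⟩)).mp main

open MeasureTheory ProbabilityTheory

set_option linter.unusedSectionVars false
section Glue
variable {Ω : Type*} [MeasurableSpace Ω] (μ : Measure Ω) [IsProbabilityMeasure μ]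

noncomputable def pm (X : Ω → ℝ) : ℝ → ℝ≥0∞ := fun x => μ (X ⁻¹' {x})

variable {μ}

lemma pm_range {X : Ω → ℝ} {x : ℝ} (hx : x ∉ Set.range X) : pm μ X x = 0 := by
  have : X ⁻¹' {x} = ∅ := by
    ext ω; simp only [Set.mem_preimage, Set.mem_singleton_iff, Set.mem_empty_iff_false,
      iff_false]
    exact fun h => hx ⟨ω, h⟩
  simp [pm, this]

lemma tsum_pm {X : Ω → ℝ} (hm : Measurable X) (hc : (Set.range X).Countable) :
    ∑' x, pm μ X x = 1 := by
  have hsupp : Function.support (pm μ X) ⊆ Set.range X := by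
    intro x hx
    by_contra h
    exact hx (pm_range h)
  rw [← tsum_subtype_eq_of_support_subset hsupp]
  haveI := hc.to_subtype
  have hdisj : Pairwise (Function.onFun Disjoint fun x : Set.range X => X ⁻¹' {(x : ℝ)}) := by
    intro i j hij
    refine Set.disjoint_left.2 fun ω hi hj => hij ?_
    exact Subtype.ext (by
      simp only [Set.mem_preimage, Set.mem_singleton_iff] at hi hj
      rw [← hi, ← hj])
  have := measure_iUnion (μ := μ) hdisj (fun x : Set.range X => hm (measurableSet_singleton _))
  have huniv : (⋃ x : Set.range X, X ⁻¹' {(x : ℝ)}) = Set.univ := by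
    ext ω
    simp only [Set.mem_iUnion, Set.mem_preimage, Set.mem_singleton_iff, Set.mem_univ, iff_true]
    exact ⟨⟨X ω, Set.mem_range_self ω⟩, rfl⟩
  show (∑' x : Set.range X, μ (X ⁻¹' {(x : ℝ)})) = 1
  rw [← this, huniv, measure_univ]

lemma pm_add {X Y : Ω → ℝ} (hmX : Measurable X) (hmY : Measurable Y)
    (hcX : (Set.range X).Countable) (hind : IndepFun X Y μ) (s : ℝ) :
    pm μ (fun ω => X ω + Y ω) s = conv (pm μ X) (pm μ Y) s := by
  have hsupp : Function.support (fun x => pm μ X x * pm μ Y (s - x)) ⊆ Set.range X := by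
    intro x hx
    by_contra h
    refine hx ?_
    show pm μ X x * pm μ Y (s - x) = 0
    rw [pm_range h, zero_mul]
  rw [conv, ← tsum_subtype_eq_of_support_subset hsupp]
  haveI := hcX.to_subtype
  have hterm : ∀ x : Set.range X, pm μ X (x : ℝ) * pm μ Y (s - (x : ℝ)) =
      μ (X ⁻¹' {(x : ℝ)} ∩ Y ⁻¹' {s - (x : ℝ)}) := fun x =>
    (hind.measure_inter_preimage_eq_mul _ _ (measurableSet_singleton _)
      (measurableSet_singleton _)).symm
  rw [tsum_congr hterm]
  have hdisj : Pairwise (Function.onFun Disjoint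
      fun x : Set.range X => X ⁻¹' {(x : ℝ)} ∩ Y ⁻¹' {s - (x : ℝ)}) := by
    intro i j hij
    refine Set.disjoint_left.2 fun ω hi hj => hij ?_
    exact Subtype.ext (by
      obtain ⟨hi1, -⟩ := hi; obtain ⟨hj1, -⟩ := hj
      simp only [Set.mem_preimage, Set.mem_singleton_iff] at hi1 hj1
      rw [← hi1, ← hj1])
  rw [← measure_iUnion hdisj (fun x => (hmX (measurableSet_singleton _)).inter
      (hmY (measurableSet_singleton _)))]
  have hun : (⋃ x : Set.range X, X ⁻¹' {(x : ℝ)} ∩ Y ⁻¹' {s - (x : ℝ)}) =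
      (fun ω => X ω + Y ω) ⁻¹' {s} := by
    ext ω
    simp only [Set.mem_iUnion, Set.mem_inter_iff, Set.mem_preimage, Set.mem_singleton_iff]
    constructor
    · rintro ⟨x, hx1, hx2⟩; rw [hx1, hx2]; ring
    · intro h
      exact ⟨⟨X ω, Set.mem_range_self ω⟩, rfl, by simp only; linarith⟩
  rw [hun]; rfl

lemma pm_add3 {X Y Z : Ω → ℝ} (hmX : Measurable X) (hmY : Measurable Y) (hmZ : Measurable Z)
    (hcY : (Set.range Y).Countable) (hcZ : (Set.range Z).Countable)
    (hprod : ∀ y z x, μ (Y ⁻¹' {y} ∩ Z ⁻¹' {z} ∩ X ⁻¹' {x})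
      = pm μ Y y * pm μ Z z * pm μ X x) (s : ℝ) :
    pm μ (fun ω => X ω + Y ω + Z ω) s = c3 (pm μ X) (pm μ Y) (pm μ Z) s := by
  haveI := hcY.to_subtype
  haveI := hcZ.to_subtype
  have hsupp1 : Function.support (fun y => ∑' z, pm μ Y y * pm μ Z z * pm μ X (s - y - z))
      ⊆ Set.range Y := by
    intro y hy
    by_contra h
    refine hy ?_
    simp only [pm_range h, zero_mul]
    exact tsum_zero
  have step1 : c3 (pm μ X) (pm μ Y) (pm μ Z) s
      = ∑' y : Set.range Y, ∑' z, pm μ Y (y : ℝ) * pm μ Z z * pm μ X (s - (y : ℝ) - z) := by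
    rw [c3, ← tsum_subtype_eq_of_support_subset hsupp1]
  have hsupp2 : ∀ y : ℝ, Function.support (fun z => pm μ Y y * pm μ Z z * pm μ X (s - y - z))
      ⊆ Set.range Z := by
    intro y z hz
    by_contra h
    refine hz ?_
    show pm μ Y y * pm μ Z z * pm μ X (s - y - z) = 0
    rw [pm_range h, mul_zero, zero_mul]
  have step2 : ∀ y : ℝ, (∑' z, pm μ Y y * pm μ Z z * pm μ X (s - y - z))
      = ∑' z : Set.range Z, pm μ Y y * pm μ Z (z : ℝ) * pm μ X (s - y - (z : ℝ)) := by
    intro y; rw [← tsum_subtype_eq_of_support_subset (hsupp2 y)]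
  -- identify with measures
  have hterm : ∀ (y z : ℝ), pm μ Y y * pm μ Z z * pm μ X (s - y - z)
      = μ (Y ⁻¹' {y} ∩ Z ⁻¹' {z} ∩ X ⁻¹' {s - y - z}) := fun y z => (hprod y z _).symm
  have hinner : ∀ y : ℝ, (∑' z : Set.range Z, μ (Y ⁻¹' {y} ∩ Z ⁻¹' {(z : ℝ)}
      ∩ X ⁻¹' {s - y - (z : ℝ)}))
      = μ (⋃ z : Set.range Z, Y ⁻¹' {y} ∩ Z ⁻¹' {(z : ℝ)} ∩ X ⁻¹' {s - y - (z : ℝ)}) := by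
    intro y
    refine (measure_iUnion ?_ ?_).symm
    · intro i j hij
      refine Set.disjoint_left.2 fun ω hi hj => hij ?_
      obtain ⟨⟨-, hi2⟩, -⟩ := hi; obtain ⟨⟨-, hj2⟩, -⟩ := hj
      simp only [Set.mem_preimage, Set.mem_singleton_iff] at hi2 hj2
      exact Subtype.ext (by rw [← hi2, ← hj2])
    · exact fun z => ((hmY (measurableSet_singleton _)).inter
        (hmZ (measurableSet_singleton _))).inter (hmX (measurableSet_singleton _))
  have houter : (∑' y : Set.range Y, μ (⋃ z : Set.range Z, Y ⁻¹' {(y : ℝ)} ∩ Z ⁻¹' {(z : ℝ)}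
      ∩ X ⁻¹' {s - (y : ℝ) - (z : ℝ)}))
      = μ (⋃ y : Set.range Y, ⋃ z : Set.range Z, Y ⁻¹' {(y : ℝ)} ∩ Z ⁻¹' {(z : ℝ)}
      ∩ X ⁻¹' {s - (y : ℝ) - (z : ℝ)}) := by
    refine (measure_iUnion ?_ ?_).symm
    · intro i j hij
      refine Set.disjoint_left.2 fun ω hi hj => hij ?_
      simp only [Set.mem_iUnion, Set.mem_inter_iff, Set.mem_preimage,
        Set.mem_singleton_iff] at hi hj
      obtain ⟨-, ⟨⟨hi1, -⟩, -⟩⟩ := hi; obtain ⟨-, ⟨⟨hj1, -⟩, -⟩⟩ := hj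
      exact Subtype.ext (by rw [← hi1, ← hj1])
    · exact fun y => MeasurableSet.iUnion fun z => ((hmY (measurableSet_singleton _)).inter
        (hmZ (measurableSet_singleton _))).inter (hmX (measurableSet_singleton _))
  have hun : (⋃ y : Set.range Y, ⋃ z : Set.range Z, Y ⁻¹' {(y : ℝ)} ∩ Z ⁻¹' {(z : ℝ)}
      ∩ X ⁻¹' {s - (y : ℝ) - (z : ℝ)}) = (fun ω => X ω + Y ω + Z ω) ⁻¹' {s} := by
    ext ω
    simp only [Set.mem_iUnion, Set.mem_inter_iff, Set.mem_preimage, Set.mem_singleton_iff]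
    constructor
    · rintro ⟨y, z, ⟨h1, h2⟩, h3⟩; rw [h1, h2, h3]; ring
    · intro h
      refine ⟨⟨Y ω, Set.mem_range_self ω⟩, ⟨Z ω, Set.mem_range_self ω⟩, ⟨⟨rfl, rfl⟩, ?_⟩⟩
      simp only; linarith
  rw [step1]
  refine Eq.symm ?_
  calc (∑' y : Set.range Y, ∑' z, pm μ Y (y : ℝ) * pm μ Z z * pm μ X (s - (y : ℝ) - z))
      = ∑' y : Set.range Y, ∑' z : Set.range Z, μ (Y ⁻¹' {(y : ℝ)} ∩ Z ⁻¹' {(z : ℝ)}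
          ∩ X ⁻¹' {s - (y : ℝ) - (z : ℝ)}) := by
        refine tsum_congr fun y => ?_
        rw [step2 (y : ℝ)]
        exact tsum_congr fun z => hterm _ _
    _ = μ ((fun ω => X ω + Y ω + Z ω) ⁻¹' {s}) := by
        rw [tsum_congr fun y : Set.range Y => hinner (y : ℝ), houter, hun]
    _ = pm μ (fun ω => X ω + Y ω + Z ω) s := rfl

end Glue
section Bridge
variable {Ω : Type*} [MeasurableSpace Ω] {μ : Measure Ω} [IsProbabilityMeasure μ] {X : Ω → ℝ}

noncomputable def entE (μ : Measure Ω) (X : Ω → ℝ) : ℝ≥0∞ := entH (pm μ X)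

lemma pm_le_one (x : ℝ) : pm μ X x ≤ 1 := prob_le_one

lemma ent_term_nonneg (x : ℝ) :
    0 ≤ -((μ (X ⁻¹' {x})).toReal * Real.logb 2 (μ (X ⁻¹' {x})).toReal) := by
  have h1 : (μ (X ⁻¹' {x})).toReal ≤ 1 := by
    simpa [pm] using ENNReal.toReal_mono ENNReal.one_ne_top (pm_le_one (μ := μ) (X := X) x)
  have h2 : Real.logb 2 (μ (X ⁻¹' {x})).toReal ≤ 0 :=
    logb_nonpos_of_le_one (pm_le_one (μ := μ) (X := X) x)
  have h0 : (0:ℝ) ≤ (μ (X ⁻¹' {x})).toReal := ENNReal.toReal_nonneg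
  nlinarith

lemma ent_nonneg : 0 ≤ ent μ X := tsum_nonneg fun x => ent_term_nonneg x

lemma entE_eq : entE μ X = ∑' x : ℝ,
    ENNReal.ofReal (-((μ (X ⁻¹' {x})).toReal * Real.logb 2 (μ (X ⁻¹' {x})).toReal)) := rfl

lemma entE_ne_top_iff : entE μ X ≠ ∞ ↔
    Summable (fun x : ℝ => -((μ (X ⁻¹' {x})).toReal * Real.logb 2 (μ (X ⁻¹' {x})).toReal)) := by
  rw [entE_eq]
  exact tsum_ofReal_ne_top_iff fun x => ent_term_nonneg x

lemma ent_eq_toReal (h : entE μ X ≠ ∞) : ent μ X = (entE μ X).toReal := by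
  rw [entE_eq, ent, tsum_ofReal_toReal (fun x => ent_term_nonneg x) (entE_ne_top_iff.mp h)]

lemma ent_eq_zero_of_top (h : entE μ X = ∞) : ent μ X = 0 :=
  tsum_eq_zero_of_not_summable (fun hs => (entE_ne_top_iff.mpr hs) h)

end Bridge

lemma range_add_countable {Ω : Type*} {f g : Ω → ℝ} (hf : (Set.range f).Countable)
    (hg : (Set.range g).Countable) : (Set.range (fun ω => f ω + g ω)).Countable := by
  have : Set.range (fun ω => f ω + g ω) ⊆ Set.image2 (· + ·) (Set.range f) (Set.range g) := by
    rintro x ⟨ω, rfl⟩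
    exact Set.mem_image2_of_mem (Set.mem_range_self ω) (Set.mem_range_self ω)
  exact (Set.Countable.image2 hf hg _).mono this

lemma range_sum_countable {Ω : Type*} {n : ℕ} {Y : Fin n → Ω → ℝ}
    (hY : ∀ i, (Set.range (Y i)).Countable) (A : Finset (Fin n)) :
    (Set.range (fun ω => ∑ i ∈ A, Y i ω)).Countable := by
  classical
  induction A using Finset.induction_on with
  | empty =>
      simp only [Finset.sum_empty]
      refine Set.Countable.mono ?_ (Set.countable_singleton 0)
      rintro x ⟨ω, rfl⟩; simp
  | @insert a A' hi ih =>
      have : (fun ω => ∑ i ∈ insert a A', Y i ω) = fun ω => Y a ω + ∑ i ∈ A', Y i ω := by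
        funext ω; rw [Finset.sum_insert hi]
      rw [this]
      exact range_add_countable (hY a) ih

lemma indep_aux {Ω : Type*} [MeasurableSpace Ω] {μ : Measure Ω}
    {n : ℕ} {F : Fin n → Ω → ℝ} (hind : iIndepFun F μ)
    (hFm : ∀ i, Measurable (F i)) (s t : Finset (Fin n)) (hst : Disjoint s t)
    {γ δ : Type*} [MeasurableSpace γ] [MeasurableSpace δ]
    (φ : ((i : s) → ℝ) → γ) (ψ : ((i : t) → ℝ) → δ) (hφ : Measurable φ) (hψ : Measurable ψ)
    (G : Ω → γ) (H : Ω → δ)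
    (hG : ∀ ω, φ (fun i => F i ω) = G ω) (hH : ∀ ω, ψ (fun i => F i ω) = H ω) :
    IndepFun G H μ := by
  have h := (hind.indepFun_finset s t hst hFm).comp hφ hψ
  have e1 : (φ ∘ fun ω (i : s) => F i ω) = G := funext hG
  have e2 : (ψ ∘ fun ω (i : t) => F i ω) = H := funext hH
  rwa [e1, e2] at h
lemma entH_pm_const_zero {Ω : Type*} [MeasurableSpace Ω] (μ : Measure Ω)
    [IsProbabilityMeasure μ] : entH (pm μ (fun _ => (0:ℝ))) = 0 := by
  have : ∀ x : ℝ, ee (pm μ (fun _ : Ω => (0:ℝ)) x) = 0 := by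
    intro x
    by_cases hx : (0:ℝ) = x
    · have : pm μ (fun _ : Ω => (0:ℝ)) x = 1 := by
        rw [pm, show ((fun _ : Ω => (0:ℝ)) ⁻¹' {x}) = Set.univ from by ext ω; simp [hx]]
        exact measure_univ
      rw [this]; simp [ee]
    · have : pm μ (fun _ : Ω => (0:ℝ)) x = 0 := by
        rw [pm, show ((fun _ : Ω => (0:ℝ)) ⁻¹' {x}) = ∅ from by ext ω; simp [hx]]
        exact measure_empty
      rw [this]; simp [ee]
  rw [entH, tsum_congr this, tsum_zero]

theorem stmt2 {Ω : Type*} [MeasurableSpace Ω] (μ : Measure Ω) [IsProbabilityMeasure μ]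
    (m : ℕ) (X : Ω → ℝ) (Y : Fin m → Ω → ℝ)
    (hX : DiscreteFinEnt μ X) (hY : ∀ i, DiscreteFinEnt μ (Y i))
    (hind : iIndepFun ((Fin.cons X Y : Fin (m + 1) → Ω → ℝ)) μ)
    (ε C : ℝ) (hε : ε ∈ Set.Ioo (0 : ℝ) (1 / 2)) (hC : 0 < C)
    (hbound : ∀ i, ent μ (fun ω => X ω + Y i ω) ≤ (1 + C * ε) * ent μ X) :
    ent μ (fun ω => X ω + ∑ i, Y i ω) ≤ (1 + (m : ℝ) * C * ε) * ent μ X := by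
  classical
  obtain ⟨hXm, hXc, hXsum⟩ := hX
  have hYm : ∀ i, Measurable (Y i) := fun i => (hY i).1
  have hYc : ∀ i, (Set.range (Y i)).Countable := fun i => (hY i).2.1
  have hFm : ∀ i : Fin (m+1), Measurable ((Fin.cons X Y : Fin (m+1) → Ω → ℝ) i) := by
    intro i
    refine Fin.cases ?_ ?_ i
    · rw [Fin.cons_zero]; exact hXm
    · intro j; rw [Fin.cons_succ]; exact hYm j
  have hSm : ∀ A : Finset (Fin m), Measurable (fun ω => ∑ j ∈ A, Y j ω) :=
    fun A => Finset.measurable_sum A (fun i _ => hYm i)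
  have hSc : ∀ A : Finset (Fin m), (Set.range (fun ω => ∑ j ∈ A, Y j ω)).Countable :=
    fun A => range_sum_countable hYc A
  -- independence: pair (S_A, X) vs Y i
  have hPair : ∀ (A : Finset (Fin m)) (i : Fin m), i ∉ A →
      IndepFun (fun ω => ((∑ j ∈ A, Y j ω : ℝ), X ω)) (Y i) μ := by
    intro A i hi
    have hst : Disjoint (insert (0 : Fin (m+1)) (A.image Fin.succ)) ({i.succ} : Finset (Fin (m+1))) := by
      rw [Finset.disjoint_right]
      intro j hj
      rw [Finset.mem_singleton] at hj
      subst hj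
      rw [Finset.mem_insert]
      push_neg
      refine ⟨Fin.succ_ne_zero i, fun hmem => ?_⟩
      obtain ⟨k, hk, hkeq⟩ := Finset.mem_image.mp hmem
      cases Fin.succ_injective m hkeq
      exact hi hk
    have hmem1 : ∀ j : {x // x ∈ A}, ((j : Fin m).succ : Fin (m+1))
        ∈ insert (0 : Fin (m+1)) (A.image Fin.succ) := fun j =>
      Finset.mem_insert_of_mem (Finset.mem_image_of_mem _ j.2)
    have hmem0 : (0 : Fin (m+1)) ∈ insert (0 : Fin (m+1)) (A.image Fin.succ) :=
      Finset.mem_insert_self _ _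
    refine indep_aux hind hFm _ _ hst
      (fun v => ((∑ j ∈ A.attach, v ⟨(j : Fin m).succ, hmem1 j⟩ : ℝ), v ⟨0, hmem0⟩))
      (fun v => v ⟨i.succ, Finset.mem_singleton_self _⟩)
      (Measurable.prodMk (Finset.measurable_sum _ (fun j _ => by exact measurable_pi_apply _))
        (measurable_pi_apply _))
      (measurable_pi_apply _) _ _ ?_ ?_
    · intro ω
      simp only
      refine Prod.ext ?_ ?_
      · show (∑ j ∈ A.attach, (Fin.cons X Y : Fin (m+1) → Ω → ℝ) (j : Fin m).succ ω) = _
        rw [Finset.sum_attach A (fun k => (Fin.cons X Y : Fin (m+1) → Ω → ℝ) k.succ ω)]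
        exact Finset.sum_congr rfl fun k _ => by rw [Fin.cons_succ]
      · show (Fin.cons X Y : Fin (m+1) → Ω → ℝ) 0 ω = X ω
        rw [Fin.cons_zero]
    · intro ω
      show (Fin.cons X Y : Fin (m+1) → Ω → ℝ) i.succ ω = Y i ω
      rw [Fin.cons_succ]
  -- X vs S_A
  have hXS : ∀ A : Finset (Fin m), IndepFun X (fun ω => ∑ j ∈ A, Y j ω) μ := by
    intro A
    have hst : Disjoint ({0} : Finset (Fin (m+1))) (A.image Fin.succ) := by
      rw [Finset.disjoint_left]
      intro j hj
      rw [Finset.mem_singleton] at hj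
      subst hj
      intro hmem
      obtain ⟨k, -, hkeq⟩ := Finset.mem_image.mp hmem
      exact Fin.succ_ne_zero k hkeq
    have hmem1 : ∀ j : {x // x ∈ A}, ((j : Fin m).succ : Fin (m+1)) ∈ A.image Fin.succ :=
      fun j => Finset.mem_image_of_mem _ j.2
    refine indep_aux hind hFm _ _ hst
      (fun v => v ⟨0, Finset.mem_singleton_self _⟩)
      (fun v => (∑ j ∈ A.attach, v ⟨(j : Fin m).succ, hmem1 j⟩ : ℝ))
      (measurable_pi_apply _)
      (Finset.measurable_sum _ (fun j _ => by exact measurable_pi_apply _)) _ _ ?_ ?_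
    · intro ω
      show (Fin.cons X Y : Fin (m+1) → Ω → ℝ) 0 ω = X ω
      rw [Fin.cons_zero]
    · intro ω
      show (∑ j ∈ A.attach, (Fin.cons X Y : Fin (m+1) → Ω → ℝ) (j : Fin m).succ ω) = _
      rw [Finset.sum_attach A (fun k => (Fin.cons X Y : Fin (m+1) → Ω → ℝ) k.succ ω)]
      exact Finset.sum_congr rfl fun k _ => by rw [Fin.cons_succ]
  -- S_A vs Y i
  have hSY : ∀ (A : Finset (Fin m)) (i : Fin m), i ∉ A →
      IndepFun (fun ω => ∑ j ∈ A, Y j ω) (Y i) μ := by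
    intro A i hi
    exact (hPair A i hi).comp measurable_fst measurable_id
  -- X vs Y i
  have hXY : ∀ i : Fin m, IndepFun X (Y i) μ := by
    intro i
    have h := hXS {i}
    have : (fun ω => ∑ j ∈ ({i} : Finset (Fin m)), Y j ω) = Y i :=
      funext fun ω => Finset.sum_singleton _ _
    rwa [this] at h
  -- triple product
  have hprod : ∀ (A : Finset (Fin m)) (i : Fin m), i ∉ A → ∀ y z x : ℝ,
      μ ((fun ω => ∑ j ∈ A, Y j ω) ⁻¹' {y} ∩ Y i ⁻¹' {z} ∩ X ⁻¹' {x})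
        = pm μ (fun ω => ∑ j ∈ A, Y j ω) y * pm μ (Y i) z * pm μ X x := by
    intro A i hi y z x
    have hW := (hPair A i hi).measure_inter_preimage_eq_mul {(y, x)} {z}
      (measurableSet_singleton _) (measurableSet_singleton _)
    have hset : (fun ω => ((∑ j ∈ A, Y j ω : ℝ), X ω)) ⁻¹' {(y, x)}
        = (fun ω => ∑ j ∈ A, Y j ω) ⁻¹' {y} ∩ X ⁻¹' {x} := by
      ext ω; simp [Prod.ext_iff]
    have hSX := ((hXS A).symm).measure_inter_preimage_eq_mul {y} {x}
      (measurableSet_singleton _) (measurableSet_singleton _)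
    have hre : (fun ω => ∑ j ∈ A, Y j ω) ⁻¹' {y} ∩ Y i ⁻¹' {z} ∩ X ⁻¹' {x}
        = ((fun ω => ∑ j ∈ A, Y j ω) ⁻¹' {y} ∩ X ⁻¹' {x}) ∩ Y i ⁻¹' {z} := by
      ext ω; simp only [Set.mem_inter_iff]; tauto
    rw [hre, ← hset, hW, hset, hSX]
    simp only [pm]
    ring
  -- case-2 independence
  have hE : ∀ i : Fin m, IndepFun (fun ω => X ω + Y i ω)
      (fun ω => ∑ j ∈ Finset.univ.erase i, Y j ω) μ := by
    intro i
    have hst : Disjoint ({0, i.succ} : Finset (Fin (m+1)))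
        ((Finset.univ.erase i).image Fin.succ) := by
      rw [Finset.disjoint_right]
      intro j hj
      obtain ⟨k, hk, hkeq⟩ := Finset.mem_image.mp hj
      subst hkeq
      rw [Finset.mem_insert, Finset.mem_singleton]
      push_neg
      refine ⟨Fin.succ_ne_zero k, fun h => ?_⟩
      cases Fin.succ_injective m h
      exact (Finset.mem_erase.mp hk).1 rfl
    have hmem0 : (0 : Fin (m+1)) ∈ ({0, i.succ} : Finset (Fin (m+1))) :=
      Finset.mem_insert_self _ _
    have hmemi : (i.succ : Fin (m+1)) ∈ ({0, i.succ} : Finset (Fin (m+1))) :=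
      Finset.mem_insert_of_mem (Finset.mem_singleton_self _)
    have hmem1 : ∀ j : {x // x ∈ Finset.univ.erase i}, ((j : Fin m).succ : Fin (m+1))
        ∈ (Finset.univ.erase i).image Fin.succ := fun j => Finset.mem_image_of_mem _ j.2
    refine indep_aux hind hFm _ _ hst
      (fun v => v ⟨0, hmem0⟩ + v ⟨i.succ, hmemi⟩)
      (fun v => (∑ j ∈ (Finset.univ.erase i).attach, v ⟨(j : Fin m).succ, hmem1 j⟩ : ℝ))
      (by exact (measurable_pi_apply _).add (measurable_pi_apply _))
      (Finset.measurable_sum _ (fun j _ => by exact measurable_pi_apply _)) _ _ ?_ ?_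
    · intro ω
      show (Fin.cons X Y : Fin (m+1) → Ω → ℝ) 0 ω
          + (Fin.cons X Y : Fin (m+1) → Ω → ℝ) i.succ ω = X ω + Y i ω
      rw [Fin.cons_zero, Fin.cons_succ]
    · intro ω
      show (∑ j ∈ (Finset.univ.erase i).attach,
          (Fin.cons X Y : Fin (m+1) → Ω → ℝ) (j : Fin m).succ ω) = _
      rw [Finset.sum_attach (Finset.univ.erase i)
        (fun k => (Fin.cons X Y : Fin (m+1) → Ω → ℝ) k.succ ω)]
      exact Finset.sum_congr rfl fun k _ => by rw [Fin.cons_succ]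
  -- pmf facts
  have hP1 : ∑' x, pm μ X x = 1 := tsum_pm hXm hXc
  have hQ1 : ∀ i, ∑' x, pm μ (Y i) x = 1 := fun i => tsum_pm (hYm i) (hYc i)
  have hS1 : ∀ A : Finset (Fin m), ∑' x, pm μ (fun ω => ∑ j ∈ A, Y j ω) x = 1 :=
    fun A => tsum_pm (hSm A) (hSc A)
  have hQfin : ∀ i, entH (pm μ (Y i)) ≠ ∞ := fun i => entE_ne_top_iff.mpr (hY i).2.2
  have hPfin : entH (pm μ X) ≠ ∞ := entE_ne_top_iff.mpr hXsum
  -- entropy of partial sums is finite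
  have hSfin : ∀ A : Finset (Fin m), entH (pm μ (fun ω => ∑ j ∈ A, Y j ω)) ≠ ∞ := by
    intro A
    induction A using Finset.induction_on with
    | empty =>
        have h0 : (fun ω : Ω => ∑ j ∈ (∅ : Finset (Fin m)), Y j ω) = fun _ => (0:ℝ) :=
          funext fun ω => Finset.sum_empty
        rw [h0, entH_pm_const_zero]
        exact ENNReal.zero_ne_top
    | @insert a A' ha ih =>
        have heq : (fun ω : Ω => ∑ j ∈ insert a A', Y j ω)
            = fun ω => (∑ j ∈ A', Y j ω) + Y a ω :=
          funext fun ω => by rw [Finset.sum_insert ha]; ring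
        rw [heq]
        have hpm : pm μ (fun ω => (∑ j ∈ A', Y j ω) + Y a ω)
            = conv (pm μ (fun ω => ∑ j ∈ A', Y j ω)) (pm μ (Y a)) :=
          funext fun s => pm_add (hSm A') (hYm a) (hSc A') (hSY A' a ha) s
        rw [show entH (pm μ (fun ω => (∑ j ∈ A', Y j ω) + Y a ω))
            = entH (conv (pm μ (fun ω => ∑ j ∈ A', Y j ω)) (pm μ (Y a))) from by rw [hpm]]
        exact ((entH_conv_le (hS1 A') (hQ1 a)).trans_lt
          (ENNReal.add_lt_top.mpr ⟨ih.lt_top, (hQfin a).lt_top⟩)).ne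
  by_cases hall : ∀ i, entH (pm μ (fun ω => X ω + Y i ω)) ≠ ∞
  · -- main case
    have claim : ∀ A : Finset (Fin m),
        entH (pm μ (fun ω => X ω + ∑ j ∈ A, Y j ω)) + (A.card : ℝ≥0∞) * entH (pm μ X)
          ≤ (∑ i ∈ A, entH (pm μ (fun ω => X ω + Y i ω))) + entH (pm μ X) := by
      intro A
      induction A using Finset.induction_on with
      | empty =>
          simp only [Finset.sum_empty, add_zero, Finset.card_empty, Nat.cast_zero, zero_mul,
            zero_add]
          exact le_rfl
      | @insert a A' ha ih =>
          have heq : (fun ω : Ω => X ω + ∑ j ∈ insert a A', Y j ω)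
              = fun ω => X ω + (∑ j ∈ A', Y j ω) + Y a ω :=
            funext fun ω => by rw [Finset.sum_insert ha]; ring
          rw [heq]
          have hc3 : pm μ (fun ω => X ω + (∑ j ∈ A', Y j ω) + Y a ω)
              = c3 (pm μ X) (pm μ (fun ω => ∑ j ∈ A', Y j ω)) (pm μ (Y a)) :=
            funext fun s => pm_add3 hXm (hSm A') (hYm a) (hSc A') (hYc a) (hprod A' a ha) s
          rw [show entH (pm μ (fun ω => X ω + (∑ j ∈ A', Y j ω) + Y a ω))
              = entH (c3 (pm μ X) (pm μ (fun ω => ∑ j ∈ A', Y j ω)) (pm μ (Y a))) from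
            by rw [hc3]]
          have hkv := kv_core hP1 (hS1 A') (hQ1 a) (hSfin A') (hQfin a)
          have ha' : pm μ (fun ω => X ω + ∑ j ∈ A', Y j ω)
              = conv (pm μ X) (pm μ (fun ω => ∑ j ∈ A', Y j ω)) :=
            funext fun s => pm_add hXm (hSm A') hXc (hXS A') s
          have hb' : pm μ (fun ω => X ω + Y a ω) = conv (pm μ X) (pm μ (Y a)) :=
            funext fun s => pm_add hXm (hYm a) hXc (hXY a) s
          rw [← ha', ← hb'] at hkv
          rw [Finset.sum_insert ha, Finset.card_insert_of_notMem ha, Nat.cast_add,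
            Nat.cast_one]
          calc entH (c3 (pm μ X) (pm μ (fun ω => ∑ j ∈ A', Y j ω)) (pm μ (Y a)))
                + ((A'.card : ℝ≥0∞) + 1) * entH (pm μ X)
              = (entH (c3 (pm μ X) (pm μ (fun ω => ∑ j ∈ A', Y j ω)) (pm μ (Y a)))
                + entH (pm μ X)) + (A'.card : ℝ≥0∞) * entH (pm μ X) := by ring
            _ ≤ (entH (pm μ (fun ω => X ω + ∑ j ∈ A', Y j ω))
                + entH (pm μ (fun ω => X ω + Y a ω))) + (A'.card : ℝ≥0∞) * entH (pm μ X) :=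
                add_le_add_left hkv _
            _ = (entH (pm μ (fun ω => X ω + ∑ j ∈ A', Y j ω))
                + (A'.card : ℝ≥0∞) * entH (pm μ X)) + entH (pm μ (fun ω => X ω + Y a ω)) := by
                ring
            _ ≤ ((∑ i ∈ A', entH (pm μ (fun ω => X ω + Y i ω))) + entH (pm μ X))
                + entH (pm μ (fun ω => X ω + Y a ω)) := add_le_add_left ih _
            _ = (entH (pm μ (fun ω => X ω + Y a ω))
                + ∑ i ∈ A', entH (pm μ (fun ω => X ω + Y i ω))) + entH (pm μ X) := by ring
    have hclaim := claim Finset.univ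
    rw [Finset.card_univ, Fintype.card_fin] at hclaim
    have hsumfin : (∑ i, entH (pm μ (fun ω => X ω + Y i ω))) ≠ ∞ :=
      (ENNReal.sum_lt_top.mpr (fun i _ => (hall i).lt_top)).ne
    have hRfin : (∑ i, entH (pm μ (fun ω => X ω + Y i ω))) + entH (pm μ X) ≠ ∞ :=
      ENNReal.add_ne_top.mpr ⟨hsumfin, hPfin⟩
    have hLfin : entH (pm μ (fun ω => X ω + ∑ i, Y i ω)) ≠ ∞ :=
      ne_top_of_le_ne_top hRfin (le_self_add.trans hclaim)
    -- pass to the reals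
    have hL : ent μ (fun ω => X ω + ∑ i, Y i ω)
        = (entH (pm μ (fun ω => X ω + ∑ i, Y i ω))).toReal := ent_eq_toReal hLfin
    have hXr : ent μ X = (entH (pm μ X)).toReal := ent_eq_toReal hPfin
    have hir : ∀ i, ent μ (fun ω => X ω + Y i ω)
        = (entH (pm μ (fun ω => X ω + Y i ω))).toReal := fun i => ent_eq_toReal (hall i)
    have hreal := ENNReal.toReal_mono hRfin hclaim
    rw [ENNReal.toReal_add hLfin (ENNReal.mul_ne_top (ENNReal.natCast_ne_top m) hPfin),
        ENNReal.toReal_add hsumfin hPfin, ENNReal.toReal_mul, ENNReal.toReal_natCast,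
        ENNReal.toReal_sum (fun i _ => hall i)] at hreal
    rw [← hL, ← hXr] at hreal
    rw [show (∑ i, ((entH (pm μ (fun ω => X ω + Y i ω))).toReal))
        = ∑ i, ent μ (fun ω => X ω + Y i ω) from
      Finset.sum_congr rfl fun i _ => (hir i).symm] at hreal
    have hsum_le : ∑ i, ent μ (fun ω => X ω + Y i ω) ≤ (m:ℝ) * ((1 + C*ε) * ent μ X) := by
      calc ∑ i, ent μ (fun ω => X ω + Y i ω) ≤ ∑ _i : Fin m, (1 + C*ε) * ent μ X :=
            Finset.sum_le_sum fun i _ => hbound i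
        _ = (m:ℝ) * ((1 + C*ε) * ent μ X) := by
            rw [Finset.sum_const, Finset.card_univ, Fintype.card_fin, nsmul_eq_mul]
    linarith [hreal, hsum_le]
  · -- some summand has infinite entropy: LHS entropy is infinite, `ent` is 0
    push_neg at hall
    obtain ⟨i, hi⟩ := hall
    have heq : (fun ω : Ω => X ω + ∑ j, Y j ω)
        = fun ω => (X ω + Y i ω) + (∑ j ∈ Finset.univ.erase i, Y j ω) := by
      funext ω
      rw [← Finset.add_sum_erase Finset.univ (fun j => Y j ω) (Finset.mem_univ i)]
      ring
    rw [heq]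
    have hpm : pm μ (fun ω => (X ω + Y i ω) + (∑ j ∈ Finset.univ.erase i, Y j ω))
        = conv (pm μ (fun ω => X ω + Y i ω))
            (pm μ (fun ω => ∑ j ∈ Finset.univ.erase i, Y j ω)) :=
      funext fun s => pm_add (hXm.add (hYm i)) (hSm _)
        (range_add_countable hXc (hYc i)) (hE i) s
    have hXYi1 : ∑' x, pm μ (fun ω => X ω + Y i ω) x = 1 :=
      tsum_pm (hXm.add (hYm i)) (range_add_countable hXc (hYc i))
    have hmono := le_entH_conv hXYi1 (hS1 (Finset.univ.erase i))
    rw [show conv (pm μ (fun ω => X ω + Y i ω))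
          (pm μ (fun ω => ∑ j ∈ Finset.univ.erase i, Y j ω))
        = pm μ (fun ω => (X ω + Y i ω) + (∑ j ∈ Finset.univ.erase i, Y j ω)) from
      hpm.symm] at hmono
    have htop : entH (pm μ (fun ω => (X ω + Y i ω)
        + (∑ j ∈ Finset.univ.erase i, Y j ω))) = ∞ :=
      eq_top_iff.mpr (hi ▸ hmono)
    rw [ent_eq_zero_of_top htop]
    have h1 : (0:ℝ) ≤ 1 + (m : ℝ) * C * ε := by
      have := hε.1
      positivity
    exact mul_nonneg h1 ent_nonneg
end

section
/- Let V₁, V₂, V₃ be independent discrete random variables with positive finite entropies satisfying H(V₂ + V₃) ≤ (1 + Cε)H(V₁), H(V₁ + V₃) ≤ (1 + Cε)H(V₁), and (1 − Cε)H(V₁) ≤ H(V₃) ≤ (1 + Cε)H(V₁), for ε ∈ (0, 1/2) and constant C. Then H(V₁ + V₂ + V₃) ≤ (1 + C'ε)H(V₁) for some constant C' depending only on C. -/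
open MeasureTheory ProbabilityTheory

open scoped ENNReal

namespace Stmt13Aux

/-- negative log (base 2), as `ℝ≥0∞`. -/
noncomputable def nl (x : ℝ≥0∞) : ℝ≥0∞ := ENNReal.ofReal (-Real.logb 2 x.toReal)

/-- entropy of a (sub)probability mass function on `ℝ`, valued in `ℝ≥0∞`. -/
noncomputable def Ent (m : ℝ → ℝ≥0∞) : ℝ≥0∞ := ∑' x : ℝ, m x * nl (m x)

lemma nl_antitone {u v : ℝ≥0∞} (hu : u ≠ 0) (huv : u ≤ v) : nl v ≤ nl u := by
  rcases eq_or_ne v ∞ with rfl | hv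
  · simp [nl]
  · apply ENNReal.ofReal_le_ofReal
    have h1 : 0 < u.toReal := ENNReal.toReal_pos hu (huv.trans_lt (Ne.lt_top hv)).ne
    have h2 : u.toReal ≤ v.toReal := ENNReal.toReal_le_toReal (huv.trans_lt (Ne.lt_top hv)).ne hv |>.mpr huv
    have := Real.logb_le_logb_of_le (b := 2) one_lt_two h1 h2
    linarith

lemma nl_mul {u v : ℝ≥0∞} (hu0 : u ≠ 0) (hu1 : u ≤ 1) (hv0 : v ≠ 0) (hv1 : v ≤ 1) :
    nl (u * v) = nl u + nl v := by
  have hu' : u ≠ ∞ := (hu1.trans_lt ENNReal.one_lt_top).ne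
  have hv' : v ≠ ∞ := (hv1.trans_lt ENNReal.one_lt_top).ne
  have hut : 0 < u.toReal := ENNReal.toReal_pos hu0 hu'
  have hvt : 0 < v.toReal := ENNReal.toReal_pos hv0 hv'
  have hut1 : u.toReal ≤ 1 := ENNReal.toReal_le_of_le_ofReal one_pos.le (by simpa using hu1)
  have hvt1 : v.toReal ≤ 1 := ENNReal.toReal_le_of_le_ofReal one_pos.le (by simpa using hv1)
  unfold nl
  rw [ENNReal.toReal_mul, Real.logb_mul hut.ne' hvt.ne', neg_add,
    ENNReal.ofReal_add (by simpa using Real.logb_nonpos one_lt_two hut.le hut1)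
      (by simpa using Real.logb_nonpos one_lt_two hvt.le hvt1)]

lemma tsum_fiber {J : Type*} (σ : J → ℝ) (F : J → ℝ≥0∞) :
    ∑' j, F j = ∑' (s : ℝ) (j : {j // σ j = s}), F (j : J) := by
  rw [← (Equiv.sigmaFiberEquiv σ).tsum_eq F, ENNReal.tsum_sigma']
  rfl

lemma Ent_rep {J : Type*} (σ : J → ℝ) (π : J → ℝ≥0∞) (m : ℝ → ℝ≥0∞)
    (hm : ∀ s, m s = ∑' j : {j // σ j = s}, π (j : J)) :
    Ent m = ∑' j, π j * nl (m (σ j)) := by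
  rw [tsum_fiber σ (fun j => π j * nl (m (σ j)))]
  refine tsum_congr fun s => ?_
  calc m s * nl (m s) = ∑' j : {j // σ j = s}, π (j : J) * nl (m s) := by
        rw [hm s, ENNReal.tsum_mul_right]
    _ = _ := tsum_congr fun j => by rw [j.2]

lemma Ent_le_of_rep {J : Type*} (σ : J → ℝ) (π : J → ℝ≥0∞) (m : ℝ → ℝ≥0∞)
    (hm : ∀ s, m s = ∑' j : {j // σ j = s}, π (j : J)) :
    Ent m ≤ ∑' j, π j * nl (π j) := by
  rw [Ent_rep σ π m hm]
  refine Summable.tsum_le_tsum (fun j => ?_) ENNReal.summable ENNReal.summable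
  rcases eq_or_ne (π j) 0 with h0 | h0
  · simp [h0]
  · refine mul_le_mul_right (nl_antitone h0 ?_) _
    rw [hm (σ j)]
    exact ENNReal.le_tsum (⟨j, rfl⟩ : {j' // σ j' = σ j})


lemma meas_partition {Ω : Type} [MeasurableSpace Ω] (μ : Measure Ω) {X : Ω → ℝ}
    (hX : Measurable X) (hc : (Set.range X).Countable) {B : Set Ω} (hB : MeasurableSet B) :
    μ B = ∑' x : ℝ, μ (B ∩ X ⁻¹' {x}) := by
  have := hc.to_subtype
  rw [← tsum_subtype_eq_of_support_subset (s := Set.range X) ?hsupp]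
  case hsupp =>
    intro x hx
    rcases Function.mem_support.mp hx with h
    by_contra hxr
    have : X ⁻¹' {x} = ∅ := by
      ext ω; simp only [Set.mem_preimage, Set.mem_singleton_iff, Set.mem_empty_iff_false,
        iff_false]
      exact fun hω => hxr ⟨ω, hω⟩
    simp [this] at h
  rw [← measure_iUnion ?_ ?_]
  · congr 1
    apply Set.eq_of_subset_of_subset
    · intro ω hω
      exact Set.mem_iUnion.mpr ⟨⟨X ω, ⟨ω, rfl⟩⟩, hω, rfl⟩
    · exact Set.iUnion_subset fun x => Set.inter_subset_left
  · intro x y hxy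
    simp only [Function.onFun]
    apply Set.disjoint_left.mpr
    rintro ω ⟨-, hx⟩ ⟨-, hy⟩
    exact hxy (Subtype.ext (by
      simp only [Set.mem_preimage, Set.mem_singleton_iff] at hx hy
      rw [← hx, ← hy]))
  · exact fun x => hB.inter (hX (measurableSet_singleton _))

lemma mul_nl_eq_ofReal {m : ℝ≥0∞} (hm : m ≤ 1) :
    m * nl m = ENNReal.ofReal (-(m.toReal * Real.logb 2 m.toReal)) := by
  have hm' : m ≠ ∞ := (hm.trans_lt ENNReal.one_lt_top).ne
  have h1 : m.toReal ≤ 1 := by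
    simpa using (ENNReal.toReal_le_toReal hm' ENNReal.one_ne_top).mpr hm
  have h0 : 0 ≤ -Real.logb 2 m.toReal := by
    simpa using Real.logb_nonpos one_lt_two ENNReal.toReal_nonneg h1
  rw [nl, ← ENNReal.ofReal_toReal hm', ← ENNReal.ofReal_mul ENNReal.toReal_nonneg]
  rw [ENNReal.ofReal_toReal hm']
  congr 1
  ring

lemma toReal_mul_nl {m : ℝ≥0∞} (hm : m ≤ 1) :
    (m * nl m).toReal = -(m.toReal * Real.logb 2 m.toReal) := by
  rw [mul_nl_eq_ofReal hm, ENNReal.toReal_ofReal]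
  have hm' : m ≠ ∞ := (hm.trans_lt ENNReal.one_lt_top).ne
  have h1 : m.toReal ≤ 1 := by
    simpa using (ENNReal.toReal_le_toReal hm' ENNReal.one_ne_top).mpr hm
  have hle : Real.logb 2 m.toReal ≤ 0 := Real.logb_nonpos one_lt_two ENNReal.toReal_nonneg h1
  nlinarith [ENNReal.toReal_nonneg (a := m)]


lemma neg_term_nonneg {m : ℝ≥0∞} (hm : m ≤ 1) :
    0 ≤ -(m.toReal * Real.logb 2 m.toReal) := by
  have hm' : m ≠ ∞ := (hm.trans_lt ENNReal.one_lt_top).ne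
  have h1 : m.toReal ≤ 1 := by
    simpa using (ENNReal.toReal_le_toReal hm' ENNReal.one_ne_top).mpr hm
  have hle : Real.logb 2 m.toReal ≤ 0 := Real.logb_nonpos one_lt_two ENNReal.toReal_nonneg h1
  nlinarith [ENNReal.toReal_nonneg (a := m)]

lemma ent_eq_toReal_Ent {Ω : Type} [MeasurableSpace Ω] (μ : Measure Ω)
    [IsProbabilityMeasure μ] (X : Ω → ℝ) :
    ent μ X = (Ent (fun x => μ (X ⁻¹' {x}))).toReal := by
  unfold ent Ent
  rw [ENNReal.tsum_toReal_eq (fun x => ?_)]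
  · exact tsum_congr fun x => (toReal_mul_nl prob_le_one).symm
  · exact ENNReal.mul_ne_top (measure_ne_top μ _)
      (by simp [nl])

lemma summable_of_Ent_ne_top {m : ℝ → ℝ≥0∞} (hm1 : ∀ x, m x ≤ 1) (h : Ent m ≠ ∞) :
    Summable (fun x : ℝ => -((m x).toReal * Real.logb 2 (m x).toReal)) := by
  have he : (fun x : ℝ => -((m x).toReal * Real.logb 2 (m x).toReal))
      = fun x => ((m x * nl (m x))).toReal := funext fun x => (toReal_mul_nl (hm1 x)).symm
  rw [he]
  exact ENNReal.summable_toReal h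

lemma Ent_ne_top_of_summable {m : ℝ → ℝ≥0∞} (hm1 : ∀ x, m x ≤ 1)
    (h : Summable (fun x : ℝ => -((m x).toReal * Real.logb 2 (m x).toReal))) :
    Ent m ≠ ∞ := by
  unfold Ent
  rw [tsum_congr (fun x => mul_nl_eq_ofReal (hm1 x)),
    ← ENNReal.ofReal_tsum_of_nonneg (fun x => neg_term_nonneg (hm1 x)) h]
  exact ENNReal.ofReal_ne_top


/-- fiber sum over a triple-fiber parametrized by the first two coordinates. -/
lemma tsum_fiber_triple {σ : ℝ × ℝ × ℝ → ℝ} {s : ℝ} (d : ℝ × ℝ → ℝ)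
    (hd : ∀ a b c : ℝ, σ (a, b, c) = s ↔ c = d (a, b)) (F : ℝ × ℝ × ℝ → ℝ≥0∞) :
    ∑' t : {t : ℝ × ℝ × ℝ // σ t = s}, F (t : ℝ × ℝ × ℝ) = ∑' ab : ℝ × ℝ, F (ab.1, ab.2, d ab) := by
  let e : ℝ × ℝ ≃ {t : ℝ × ℝ × ℝ // σ t = s} :=
  { toFun := fun ab => ⟨(ab.1, ab.2, d ab), (hd ab.1 ab.2 (d ab)).mpr (by rcases ab with ⟨a, b⟩; rfl)⟩
    invFun := fun t => ((t : ℝ × ℝ × ℝ).1, (t : ℝ × ℝ × ℝ).2.1)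
    left_inv := fun ab => rfl
    right_inv := fun t => by
      rcases t with ⟨⟨a, b, c⟩, ht⟩
      have hc : c = d (a, b) := (hd a b c).mp ht
      exact Subtype.ext (by simp [hc])
    }
  exact (Equiv.tsum_eq e (fun t : {t : ℝ × ℝ × ℝ // σ t = s} => F (t : ℝ × ℝ × ℝ))).symm

lemma tsum_prod_mul (F G : ℝ → ℝ≥0∞) :
    ∑' ab : ℝ × ℝ, F ab.1 * G ab.2 = (∑' a, F a) * (∑' b, G b) := by
  rw [ENNReal.tsum_prod']
  calc ∑' a, ∑' b, F a * G b = ∑' a, F a * ∑' b, G b := by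
        refine tsum_congr fun a => ?_
        rw [ENNReal.tsum_mul_left]
    _ = _ := ENNReal.tsum_mul_right

lemma tsum_triple_mul (F₁ F₂ F₃ : ℝ → ℝ≥0∞) :
    ∑' t : ℝ × ℝ × ℝ, F₁ t.1 * F₂ t.2.1 * F₃ t.2.2
      = (∑' a, F₁ a) * (∑' b, F₂ b) * (∑' c, F₃ c) := by
  rw [ENNReal.tsum_prod']
  calc ∑' a, ∑' bc : ℝ × ℝ, F₁ a * F₂ bc.1 * F₃ bc.2
      = ∑' a, F₁ a * ∑' bc : ℝ × ℝ, F₂ bc.1 * F₃ bc.2 := by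
        refine tsum_congr fun a => ?_
        rw [← ENNReal.tsum_mul_left]
        exact tsum_congr fun bc => by ring
    _ = (∑' a, F₁ a) * ∑' bc : ℝ × ℝ, F₂ bc.1 * F₃ bc.2 := ENNReal.tsum_mul_right
    _ = _ := by rw [tsum_prod_mul, mul_assoc]

end Stmt13Aux

open Stmt13Aux in
theorem stmt13 (C : ℝ) (hC : 0 < C) :
    ∃ C' : ℝ, 0 < C' ∧
      ∀ {Ω : Type} [MeasurableSpace Ω] (μ : Measure Ω) [IsProbabilityMeasure μ]
        (V₁ V₂ V₃ : Ω → ℝ) (ε : ℝ),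
        DiscreteFinEnt μ V₁ → DiscreteFinEnt μ V₂ → DiscreteFinEnt μ V₃ →
        iIndepFun ![V₁, V₂, V₃] μ →
        0 < ent μ V₁ → 0 < ent μ V₂ → 0 < ent μ V₃ →
        ε ∈ Set.Ioo (0 : ℝ) (1 / 2) →
        ent μ (fun ω => V₂ ω + V₃ ω) ≤ (1 + C * ε) * ent μ V₁ →
        ent μ (fun ω => V₁ ω + V₃ ω) ≤ (1 + C * ε) * ent μ V₁ →
        (1 - C * ε) * ent μ V₁ ≤ ent μ V₃ →
        ent μ V₃ ≤ (1 + C * ε) * ent μ V₁ →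
        ent μ (fun ω => V₁ ω + V₂ ω + V₃ ω) ≤ (1 + C' * ε) * ent μ V₁ := by
  refine ⟨3 * C, by positivity, ?_⟩
  intro Ω _ μ _ V₁ V₂ V₃ ε h1 h2 h3 hind he1 he2 he3 hε hyg hyf hyr1 hyr2
  obtain ⟨m1, c1, s1⟩ := h1
  obtain ⟨m2, c2, s2⟩ := h2
  obtain ⟨m3, c3, s3⟩ := h3
  -- probability mass functions, with values in ℝ≥0∞
  set p : ℝ → ℝ≥0∞ := fun x => μ (V₁ ⁻¹' {x}) with hpdef
  set q : ℝ → ℝ≥0∞ := fun x => μ (V₂ ⁻¹' {x}) with hqdef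
  set r : ℝ → ℝ≥0∞ := fun x => μ (V₃ ⁻¹' {x}) with hrdef
  set fm : ℝ → ℝ≥0∞ := fun x => μ ((fun ω => V₁ ω + V₃ ω) ⁻¹' {x}) with hfdef
  set gm : ℝ → ℝ≥0∞ := fun x => μ ((fun ω => V₂ ω + V₃ ω) ⁻¹' {x}) with hgdef
  set hm : ℝ → ℝ≥0∞ := fun x => μ ((fun ω => V₁ ω + V₂ ω + V₃ ω) ⁻¹' {x}) with hhdef
  set π : ℝ × ℝ × ℝ → ℝ≥0∞ := fun t => p t.1 * q t.2.1 * r t.2.2 with hπdef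
  -- independence consequences
  have i13 : IndepFun V₁ V₃ μ := by
    have := hind.indepFun (i := 0) (j := 2) (by decide)
    simpa using this
  have i23 : IndepFun V₂ V₃ μ := by
    have := hind.indepFun (i := 1) (j := 2) (by decide)
    simpa using this
  have hmeas : ∀ i, Measurable (![V₁, V₂, V₃] i) := by
    intro i; fin_cases i
    · exact m1
    · exact m2
    · exact m3
  have i1_23 : IndepFun V₁ (fun ω => V₂ ω + V₃ ω) μ := by
    have h := (hind.indepFun_prodMk hmeas 1 2 0 (by decide) (by decide)).symm
    have h2 := h.comp measurable_id (measurable_fst.add measurable_snd)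
    exact h2
  have i2_13 : IndepFun V₂ (fun ω => V₁ ω + V₃ ω) μ := by
    have h := (hind.indepFun_prodMk hmeas 0 2 1 (by decide) (by decide)).symm
    have h2 := h.comp measurable_id (measurable_fst.add measurable_snd)
    exact h2
  -- total masses
  have psum : ∑' x : ℝ, p x = 1 := by
    have h := meas_partition μ m1 c1 MeasurableSet.univ
    simp only [Set.univ_inter, measure_univ] at h
    exact h.symm
  have qsum : ∑' x : ℝ, q x = 1 := by
    have h := meas_partition μ m2 c2 MeasurableSet.univ
    simp only [Set.univ_inter, measure_univ] at h
    exact h.symm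
  have rsum : ∑' x : ℝ, r x = 1 := by
    have h := meas_partition μ m3 c3 MeasurableSet.univ
    simp only [Set.univ_inter, measure_univ] at h
    exact h.symm
  -- convolution identities
  have conv_eq : ∀ {X Y : Ω → ℝ}, Measurable X → (Set.range X).Countable → Measurable Y →
      IndepFun X Y μ → ∀ s : ℝ,
      μ ((fun ω => X ω + Y ω) ⁻¹' {s}) = ∑' x : ℝ, μ (X ⁻¹' {x}) * μ (Y ⁻¹' {s - x}) := by
    intro X Y hX hcX hY hXY s
    rw [meas_partition μ hX hcX (B := (fun ω => X ω + Y ω) ⁻¹' {s}) ((hX.add hY) (measurableSet_singleton s))]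
    refine tsum_congr fun x => ?_
    have hset : (fun ω => X ω + Y ω) ⁻¹' {s} ∩ X ⁻¹' {x} = X ⁻¹' {x} ∩ Y ⁻¹' {s - x} := by
      ext ω
      simp only [Set.mem_inter_iff, Set.mem_preimage, Set.mem_singleton_iff]
      constructor
      · rintro ⟨hs, hx⟩
        refine ⟨hx, ?_⟩
        rw [← hx]; linarith
      · rintro ⟨hx, hy⟩
        exact ⟨by rw [hx]; linarith, hx⟩
    rw [hset]
    exact hXY.measure_inter_preimage_eq_mul _ _ (measurableSet_singleton _) (measurableSet_singleton _)
  have fconv : ∀ x : ℝ, fm x = ∑' a : ℝ, p a * r (x - a) := fun x => conv_eq m1 c1 m3 i13 x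
  have gconv : ∀ x : ℝ, gm x = ∑' b : ℝ, q b * r (x - b) := fun x => conv_eq m2 c2 m3 i23 x
  have hconv1 : ∀ s : ℝ, hm s = ∑' a : ℝ, p a * gm (s - a) := by
    intro s
    have heq : (fun ω => V₁ ω + V₂ ω + V₃ ω) = (fun ω => V₁ ω + (V₂ ω + V₃ ω)) := by
      funext ω; ring
    rw [hhdef]
    simp only [heq]
    exact conv_eq m1 c1 (m2.add m3) i1_23 s
  have hconv2 : ∀ s : ℝ, hm s = ∑' b : ℝ, q b * fm (s - b) := by
    intro s
    have heq : (fun ω => V₁ ω + V₂ ω + V₃ ω) = (fun ω => V₂ ω + (V₁ ω + V₃ ω)) := by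
      funext ω; ring
    rw [hhdef]
    simp only [heq]
    exact conv_eq m2 c2 (m1.add m3) i2_13 s
  -- fiber representations
  have rep_r : ∀ s : ℝ, r s = ∑' t : {t : ℝ × ℝ × ℝ // t.2.2 = s}, π (t : ℝ × ℝ × ℝ) := by
    intro s
    rw [tsum_fiber_triple (σ := fun t => t.2.2) (fun _ => s) (fun a b c => Iff.rfl) π]
    calc r s = (∑' a : ℝ, p a) * ((∑' b : ℝ, q b) * r s) := by rw [psum, qsum, one_mul, one_mul]
      _ = (∑' a : ℝ, p a) * (∑' b : ℝ, q b * r s) := by rw [ENNReal.tsum_mul_right]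
      _ = ∑' ab : ℝ × ℝ, p ab.1 * (q ab.2 * r s) := (tsum_prod_mul _ _).symm
      _ = _ := tsum_congr fun ab => by simp only [hπdef]; ring
  have rep_f : ∀ s : ℝ, fm s = ∑' t : {t : ℝ × ℝ × ℝ // t.1 + t.2.2 = s}, π (t : ℝ × ℝ × ℝ) := by
    intro s
    rw [tsum_fiber_triple (σ := fun t => t.1 + t.2.2) (fun ab => s - ab.1)
      (fun a b c => by show a + c = s ↔ c = s - a; constructor <;> intro h <;> linarith) π]
    calc fm s = ∑' a : ℝ, p a * r (s - a) := fconv s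
      _ = (∑' a : ℝ, p a * r (s - a)) * (∑' b, q b) := by rw [qsum, mul_one]
      _ = ∑' ab : ℝ × ℝ, (p ab.1 * r (s - ab.1)) * q ab.2 := (tsum_prod_mul _ _).symm
      _ = _ := tsum_congr fun ab => by simp only [hπdef]; ring
  have rep_g : ∀ s : ℝ, gm s = ∑' t : {t : ℝ × ℝ × ℝ // t.2.1 + t.2.2 = s}, π (t : ℝ × ℝ × ℝ) := by
    intro s
    rw [tsum_fiber_triple (σ := fun t => t.2.1 + t.2.2) (fun ab => s - ab.2)
      (fun a b c => by show b + c = s ↔ c = s - b; constructor <;> intro h <;> linarith) π]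
    calc gm s = ∑' b : ℝ, q b * r (s - b) := gconv s
      _ = (∑' a, p a) * (∑' b : ℝ, q b * r (s - b)) := by rw [psum, one_mul]
      _ = ∑' ab : ℝ × ℝ, p ab.1 * (q ab.2 * r (s - ab.2)) := (tsum_prod_mul _ _).symm
      _ = _ := tsum_congr fun ab => by simp only [hπdef]; ring
  have rep_h : ∀ s : ℝ, hm s
      = ∑' t : {t : ℝ × ℝ × ℝ // t.1 + t.2.1 + t.2.2 = s}, π (t : ℝ × ℝ × ℝ) := by
    intro s
    rw [tsum_fiber_triple (σ := fun t => t.1 + t.2.1 + t.2.2) (fun ab => s - ab.1 - ab.2)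
      (fun a b c => by show a + b + c = s ↔ c = s - a - b; constructor <;> intro h <;> linarith) π]
    calc hm s = ∑' a : ℝ, p a * gm (s - a) := hconv1 s
      _ = ∑' a : ℝ, p a * ∑' b : ℝ, q b * r (s - a - b) := by
          refine tsum_congr fun a => ?_
          rw [gconv (s - a)]
      _ = ∑' a : ℝ, ∑' b : ℝ, p a * (q b * r (s - a - b)) := by
          refine tsum_congr fun a => ?_
          rw [ENNReal.tsum_mul_left]
      _ = ∑' ab : ℝ × ℝ, p ab.1 * (q ab.2 * r (s - ab.1 - ab.2)) :=
          (ENNReal.tsum_prod' (f := fun ab : ℝ × ℝ => p ab.1 * (q ab.2 * r (s - ab.1 - ab.2)))).symm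
      _ = _ := tsum_congr fun ab => by simp only [hπdef]; ring
    -- total mass of π and finiteness facts
  have πfin : ∀ t : ℝ × ℝ × ℝ, π t ≠ ∞ := fun t =>
    ENNReal.mul_ne_top (ENNReal.mul_ne_top (measure_ne_top μ _) (measure_ne_top μ _))
      (measure_ne_top μ _)
  have πsum : ∑' t : ℝ × ℝ × ℝ, π t = 1 := by
    simp only [hπdef]
    rw [tsum_triple_mul p q r, psum, qsum, rsum, one_mul, one_mul]
  have EntPfin : Ent p ≠ ∞ := Ent_ne_top_of_summable (fun x => prob_le_one) s1
  have EntQfin : Ent q ≠ ∞ := Ent_ne_top_of_summable (fun x => prob_le_one) s2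
  have EntRfin : Ent r ≠ ∞ := Ent_ne_top_of_summable (fun x => prob_le_one) s3
  have πnl_le : ∑' t : ℝ × ℝ × ℝ, π t * nl (π t) ≤ Ent p + Ent q + Ent r := by
    have step : ∀ t : ℝ × ℝ × ℝ,
        π t * nl (π t) ≤ (p t.1 * nl (p t.1)) * q t.2.1 * r t.2.2
          + p t.1 * (q t.2.1 * nl (q t.2.1)) * r t.2.2
          + p t.1 * q t.2.1 * (r t.2.2 * nl (r t.2.2)) := by
      intro t
      rcases eq_or_ne (p t.1) 0 with h1 | h1
      · simp [hπdef, h1]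
      rcases eq_or_ne (q t.2.1) 0 with h2 | h2
      · simp [hπdef, h2]
      rcases eq_or_ne (r t.2.2) 0 with h3 | h3
      · simp [hπdef, h3]
      have hnl : nl (π t) = nl (p t.1) + nl (q t.2.1) + nl (r t.2.2) := by
        simp only [hπdef]
        rw [nl_mul (mul_ne_zero h1 h2) (mul_le_one' prob_le_one prob_le_one) h3 prob_le_one,
          nl_mul h1 prob_le_one h2 prob_le_one]
      refine le_of_eq ?_
      rw [hnl]; simp only [hπdef]
      ring
    calc ∑' t : ℝ × ℝ × ℝ, π t * nl (π t)
        ≤ ∑' t : ℝ × ℝ × ℝ, ((p t.1 * nl (p t.1)) * q t.2.1 * r t.2.2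
          + p t.1 * (q t.2.1 * nl (q t.2.1)) * r t.2.2
          + p t.1 * q t.2.1 * (r t.2.2 * nl (r t.2.2))) :=
          Summable.tsum_le_tsum step ENNReal.summable ENNReal.summable
      _ = Ent p * 1 * 1 + 1 * Ent q * 1 + 1 * 1 * Ent r := by
          rw [ENNReal.tsum_add, ENNReal.tsum_add,
            tsum_triple_mul (fun a => p a * nl (p a)) q r,
            tsum_triple_mul p (fun b => q b * nl (q b)) r,
            tsum_triple_mul p q (fun c => r c * nl (r c)), psum, qsum, rsum]
          rfl
      _ = Ent p + Ent q + Ent r := by ring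
  have sumfin : Ent p + Ent q + Ent r ≠ ∞ := by
    simp [ENNReal.add_ne_top, Ne, EntPfin, EntQfin, EntRfin]
  have EntFfin : Ent fm ≠ ∞ :=
    ne_top_of_le_ne_top sumfin ((Ent_le_of_rep _ π fm rep_f).trans πnl_le)
  have EntGfin : Ent gm ≠ ∞ :=
    ne_top_of_le_ne_top sumfin ((Ent_le_of_rep _ π gm rep_g).trans πnl_le)
  have EntHfin : Ent hm ≠ ∞ :=
    ne_top_of_le_ne_top sumfin ((Ent_le_of_rep _ π hm rep_h).trans πnl_le)
  -- the key quantity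
  set KK : ℝ × ℝ × ℝ → ℝ≥0∞ := fun t =>
    π t * (fm (t.1 + t.2.2) * gm (t.2.1 + t.2.2) / (hm (t.1 + t.2.1 + t.2.2) * r t.2.2))
    with hKK
  have claim : ∑' t : ℝ × ℝ × ℝ, KK t ≤ 1 := by
    rw [tsum_fiber (fun t : ℝ × ℝ × ℝ => t.1 + t.2.1 + t.2.2) KK]
    have inner : ∀ s : ℝ,
        ∑' t : {t : ℝ × ℝ × ℝ // t.1 + t.2.1 + t.2.2 = s}, KK (t : ℝ × ℝ × ℝ) ≤ hm s := by
      intro s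
      rw [tsum_fiber_triple (fun ab => s - ab.1 - ab.2)
        (fun a b c => by show a + b + c = s ↔ c = s - a - b
                         constructor <;> intro h <;> linarith) KK]
      have hb : ∀ ab : ℝ × ℝ, KK (ab.1, ab.2, s - ab.1 - ab.2)
          ≤ (p ab.1 * gm (s - ab.1)) * (q ab.2 * fm (s - ab.2)) * (hm s)⁻¹ := by
        rintro ⟨a, b⟩
        simp only [hKK, hπdef]
        have e1 : a + (s - a - b) = s - b := by ring
        have e2 : b + (s - a - b) = s - a := by ring
        have e3 : a + b + (s - a - b) = s := by ring
        rw [e1, e2, e3]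
        rcases eq_or_ne (r (s - a - b)) 0 with h0 | h0
        · simp [h0]
        · have hfin : r (s - a - b) ≠ ∞ := measure_ne_top μ _
          rw [div_eq_mul_inv, ENNReal.mul_inv (Or.inr hfin) (Or.inl (measure_ne_top μ _))]
          refine le_of_eq ?_
          calc p a * q b * r (s - a - b)
                * (fm (s - b) * gm (s - a) * ((hm s)⁻¹ * (r (s - a - b))⁻¹))
              = p a * q b * (fm (s - b) * gm (s - a) * (hm s)⁻¹)
                * (r (s - a - b) * (r (s - a - b))⁻¹) := by ring
            _ = (p a * gm (s - a)) * (q b * fm (s - b)) * (hm s)⁻¹ := by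
                rw [ENNReal.mul_inv_cancel h0 hfin, mul_one]; ring
      calc ∑' ab : ℝ × ℝ, KK (ab.1, ab.2, s - ab.1 - ab.2)
          ≤ ∑' ab : ℝ × ℝ, (p ab.1 * gm (s - ab.1)) * (q ab.2 * fm (s - ab.2)) * (hm s)⁻¹ :=
            Summable.tsum_le_tsum hb ENNReal.summable ENNReal.summable
        _ = (∑' ab : ℝ × ℝ, (p ab.1 * gm (s - ab.1)) * (q ab.2 * fm (s - ab.2))) * (hm s)⁻¹ :=
            ENNReal.tsum_mul_right
        _ = hm s * hm s * (hm s)⁻¹ := by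
            rw [tsum_prod_mul (fun a => p a * gm (s - a)) (fun b => q b * fm (s - b)),
              ← hconv1 s, ← hconv2 s]
        _ ≤ hm s := by
            rcases eq_or_ne (hm s) 0 with h0 | h0
            · simp [h0]
            · rw [mul_assoc, ENNReal.mul_inv_cancel h0 (measure_ne_top μ _), mul_one]
    have hsum1 : ∑' s : ℝ, hm s ≤ 1 := by
      have hd : Pairwise (Function.onFun Disjoint fun s : ℝ => (fun ω => V₁ ω + V₂ ω + V₃ ω) ⁻¹' {s}) := by
        intro s s' hss'
        apply Set.disjoint_left.mpr
        intro ω hs hs'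
        simp only [Set.mem_preimage, Set.mem_singleton_iff] at hs hs'
        exact hss' (by rw [← hs, ← hs'])
      have hle := tsum_meas_le_meas_iUnion_of_disjoint μ
        (fun s => ((m1.add m2).add m3) (measurableSet_singleton s)) hd
      exact hle.trans prob_le_one
    exact (Summable.tsum_le_tsum inner ENNReal.summable ENNReal.summable).trans hsum1
    -- Ent representations
  have repEnt_h : Ent hm = ∑' t : ℝ × ℝ × ℝ, π t * nl (hm (t.1 + t.2.1 + t.2.2)) :=
    Ent_rep (fun t : ℝ × ℝ × ℝ => t.1 + t.2.1 + t.2.2) π hm rep_h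
  have repEnt_f : Ent fm = ∑' t : ℝ × ℝ × ℝ, π t * nl (fm (t.1 + t.2.2)) :=
    Ent_rep (fun t : ℝ × ℝ × ℝ => t.1 + t.2.2) π fm rep_f
  have repEnt_g : Ent gm = ∑' t : ℝ × ℝ × ℝ, π t * nl (gm (t.2.1 + t.2.2)) :=
    Ent_rep (fun t : ℝ × ℝ × ℝ => t.2.1 + t.2.2) π gm rep_g
  have repEnt_r : Ent r = ∑' t : ℝ × ℝ × ℝ, π t * nl (r t.2.2) :=
    Ent_rep (fun t : ℝ × ℝ × ℝ => t.2.2) π r rep_r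
  -- real-valued families
  set Wh : ℝ × ℝ × ℝ → ℝ := fun t => (π t * nl (hm (t.1 + t.2.1 + t.2.2))).toReal with hWh
  set Wf : ℝ × ℝ × ℝ → ℝ := fun t => (π t * nl (fm (t.1 + t.2.2))).toReal with hWf
  set Wg : ℝ × ℝ × ℝ → ℝ := fun t => (π t * nl (gm (t.2.1 + t.2.2))).toReal with hWg
  set Wr : ℝ × ℝ × ℝ → ℝ := fun t => (π t * nl (r t.2.2)).toReal with hWr
  have term_ne_top : ∀ (t : ℝ × ℝ × ℝ) (u : ℝ≥0∞), π t * nl u ≠ ∞ :=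
    fun t u => ENNReal.mul_ne_top (πfin t) ENNReal.ofReal_ne_top
  have SWh : Summable Wh := ENNReal.summable_toReal (by rw [← repEnt_h]; exact EntHfin)
  have SWf : Summable Wf := ENNReal.summable_toReal (by rw [← repEnt_f]; exact EntFfin)
  have SWg : Summable Wg := ENNReal.summable_toReal (by rw [← repEnt_g]; exact EntGfin)
  have SWr : Summable Wr := ENNReal.summable_toReal (by rw [← repEnt_r]; exact EntRfin)
  have TWh : (Ent hm).toReal = ∑' t : ℝ × ℝ × ℝ, Wh t := by
    rw [repEnt_h]; exact ENNReal.tsum_toReal_eq (fun t => term_ne_top t _)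
  have TWf : (Ent fm).toReal = ∑' t : ℝ × ℝ × ℝ, Wf t := by
    rw [repEnt_f]; exact ENNReal.tsum_toReal_eq (fun t => term_ne_top t _)
  have TWg : (Ent gm).toReal = ∑' t : ℝ × ℝ × ℝ, Wg t := by
    rw [repEnt_g]; exact ENNReal.tsum_toReal_eq (fun t => term_ne_top t _)
  have TWr : (Ent r).toReal = ∑' t : ℝ × ℝ × ℝ, Wr t := by
    rw [repEnt_r]; exact ENNReal.tsum_toReal_eq (fun t => term_ne_top t _)
  -- real versions of KK and π
  have KKfin : ∀ t : ℝ × ℝ × ℝ, KK t ≠ ∞ :=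
    fun t => (((ENNReal.le_tsum t).trans claim).trans_lt ENNReal.one_lt_top).ne
  have SK : Summable (fun t : ℝ × ℝ × ℝ => (KK t).toReal) :=
    ENNReal.summable_toReal (ne_top_of_le_ne_top ENNReal.one_ne_top claim)
  have TK : ∑' t : ℝ × ℝ × ℝ, (KK t).toReal ≤ 1 := by
    rw [← ENNReal.tsum_toReal_eq KKfin]
    simpa using ENNReal.toReal_mono ENNReal.one_ne_top claim
  have Sw : Summable (fun t : ℝ × ℝ × ℝ => (π t).toReal) :=
    ENNReal.summable_toReal (by rw [πsum]; exact ENNReal.one_ne_top)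
  have Tw : ∑' t : ℝ × ℝ × ℝ, (π t).toReal = 1 := by
    rw [← ENNReal.tsum_toReal_eq πfin, πsum]; simp
  -- pointwise key inequality
  have key : ∀ t : ℝ × ℝ × ℝ, Wh t + Wr t - (Wf t + Wg t)
      ≤ ((KK t).toReal - (π t).toReal) / Real.log 2 := by
    rintro ⟨a, b, c⟩
    rcases eq_or_ne (π (a, b, c)) 0 with h0 | h0
    · simp [hWh, hWf, hWg, hWr, hKK, h0]
    · have hpa : p a ≠ 0 := fun h => h0 (by simp [hπdef, h])
      have hqb : q b ≠ 0 := fun h => h0 (by simp [hπdef, h])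
      have hrc : r c ≠ 0 := fun h => h0 (by simp [hπdef, h])
      have hH0 : hm (a + b + c) ≠ 0 := by
        intro h
        apply h0
        refine le_antisymm ?_ zero_le
        rw [← h, rep_h]
        exact ENNReal.le_tsum (⟨(a, b, c), rfl⟩ : {t : ℝ × ℝ × ℝ // t.1 + t.2.1 + t.2.2 = a + b + c})
      have hF0 : fm (a + c) ≠ 0 := by
        intro h
        apply h0
        refine le_antisymm ?_ zero_le
        rw [← h, rep_f]
        exact ENNReal.le_tsum (⟨(a, b, c), rfl⟩ : {t : ℝ × ℝ × ℝ // t.1 + t.2.2 = a + c})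
      have hG0 : gm (b + c) ≠ 0 := by
        intro h
        apply h0
        refine le_antisymm ?_ zero_le
        rw [← h, rep_g]
        exact ENNReal.le_tsum (⟨(a, b, c), rfl⟩ : {t : ℝ × ℝ × ℝ // t.2.1 + t.2.2 = b + c})
      -- real abbreviations
      set P : ℝ := (π (a, b, c)).toReal with hP
      set F : ℝ := (fm (a + c)).toReal with hF
      set G : ℝ := (gm (b + c)).toReal with hG
      set H : ℝ := (hm (a + b + c)).toReal with hH
      set R : ℝ := (r c).toReal with hR
      have hPpos : 0 < P := ENNReal.toReal_pos h0 (πfin _)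
      have hFpos : 0 < F := ENNReal.toReal_pos hF0 (measure_ne_top μ _)
      have hGpos : 0 < G := ENNReal.toReal_pos hG0 (measure_ne_top μ _)
      have hHpos : 0 < H := ENNReal.toReal_pos hH0 (measure_ne_top μ _)
      have hRpos : 0 < R := ENNReal.toReal_pos hrc (measure_ne_top μ _)
      -- rewrite the W's
      have hnl_toReal : ∀ m : ℝ≥0∞, m ≤ 1 → (nl m).toReal = -Real.logb 2 m.toReal := by
        intro m hm1
        rw [nl, ENNReal.toReal_ofReal]
        have hm' : m ≠ ∞ := (hm1.trans_lt ENNReal.one_lt_top).ne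
        have h1 : m.toReal ≤ 1 := by
          simpa using (ENNReal.toReal_le_toReal hm' ENNReal.one_ne_top).mpr hm1
        simpa using Real.logb_nonpos one_lt_two ENNReal.toReal_nonneg h1
      have eWh : Wh (a, b, c) = P * (-Real.logb 2 H) := by
        rw [hWh]
        simp only []
        rw [ENNReal.toReal_mul, hnl_toReal _ prob_le_one]
      have eWf : Wf (a, b, c) = P * (-Real.logb 2 F) := by
        rw [hWf]
        simp only []
        rw [ENNReal.toReal_mul, hnl_toReal _ prob_le_one]
      have eWg : Wg (a, b, c) = P * (-Real.logb 2 G) := by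
        rw [hWg]
        simp only []
        rw [ENNReal.toReal_mul, hnl_toReal _ prob_le_one]
      have eWr : Wr (a, b, c) = P * (-Real.logb 2 R) := by
        rw [hWr]
        simp only []
        rw [ENNReal.toReal_mul, hnl_toReal _ prob_le_one]
      have eKK : (KK (a, b, c)).toReal = P * (F * G / (H * R)) := by
        rw [hKK]
        simp only [hπdef, hP, hF, hG, hH, hR, ENNReal.toReal_mul, ENNReal.toReal_div]
      -- the logarithmic estimate
      have hXpos : 0 < F * G / (H * R) := by positivity
      have hlog : Real.log (F * G / (H * R)) ≤ F * G / (H * R) - 1 :=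
        Real.log_le_sub_one_of_pos hXpos
      have hlogb : -Real.logb 2 H + -Real.logb 2 R - (-Real.logb 2 F + -Real.logb 2 G)
          = Real.log (F * G / (H * R)) / Real.log 2 := by
        rw [Real.log_div (by positivity) (by positivity), Real.log_mul hFpos.ne' hGpos.ne',
          Real.log_mul hHpos.ne' hRpos.ne']
        simp only [Real.logb]
        ring
      have hlog2 : (0:ℝ) < Real.log 2 := Real.log_pos one_lt_two
      rw [eWh, eWf, eWg, eWr, eKK]
      calc P * -Real.logb 2 H + P * -Real.logb 2 R - (P * -Real.logb 2 F + P * -Real.logb 2 G)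
          = P * (Real.log (F * G / (H * R)) / Real.log 2) := by rw [← hlogb]; ring
        _ ≤ P * ((F * G / (H * R) - 1) / Real.log 2) := by
            refine mul_le_mul_of_nonneg_left ?_ hPpos.le
            exact div_le_div_of_nonneg_right hlog hlog2.le
        _ = (P * (F * G / (H * R)) - P) / Real.log 2 := by ring
  -- summing up
  have tsum_key : (Ent hm).toReal + (Ent r).toReal - ((Ent fm).toReal + (Ent gm).toReal) ≤ 0 := by
    have SL : Summable (fun t : ℝ × ℝ × ℝ => Wh t + Wr t - (Wf t + Wg t)) :=
      (SWh.add SWr).sub (SWf.add SWg)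
    have SR : Summable (fun t : ℝ × ℝ × ℝ => ((KK t).toReal - (π t).toReal) / Real.log 2) :=
      (SK.sub Sw).div_const _
    have hle := Summable.tsum_le_tsum key SL SR
    rw [Summable.tsum_sub (SWh.add SWr) (SWf.add SWg), Summable.tsum_add SWh SWr, Summable.tsum_add SWf SWg,
      tsum_div_const, Summable.tsum_sub SK Sw, Tw] at hle
    have hnum : ∑' t : ℝ × ℝ × ℝ, (KK t).toReal - 1 ≤ 0 := by linarith
    have hfrac : (∑' t : ℝ × ℝ × ℝ, (KK t).toReal - 1) / Real.log 2 ≤ 0 :=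
      div_nonpos_of_nonpos_of_nonneg hnum (Real.log_nonneg one_le_two)
    rw [TWh, TWr, TWf, TWg]
    linarith
  -- identify real entropies
  have id1 : ent μ V₁ = (Ent p).toReal := ent_eq_toReal_Ent μ V₁
  have id3 : ent μ V₃ = (Ent r).toReal := ent_eq_toReal_Ent μ V₃
  have idf : ent μ (fun ω => V₁ ω + V₃ ω) = (Ent fm).toReal :=
    ent_eq_toReal_Ent μ (fun ω => V₁ ω + V₃ ω)
  have idg : ent μ (fun ω => V₂ ω + V₃ ω) = (Ent gm).toReal :=
    ent_eq_toReal_Ent μ (fun ω => V₂ ω + V₃ ω)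
  have idh : ent μ (fun ω => V₁ ω + V₂ ω + V₃ ω) = (Ent hm).toReal :=
    ent_eq_toReal_Ent μ (fun ω => V₁ ω + V₂ ω + V₃ ω)
  rw [idh, id1]
  rw [idf, id1] at hyf
  rw [idg, id1] at hyg
  rw [id3, id1] at hyr1
  linarith
end
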